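/- arXiv:1304.4894 — 9 statements merged into one kernel-verified Lean document; each statement's English description precedes it below -/
import Mathlib

section
/- Let J = [0,∞) and let f : J → ℝ be differentiable on the interior of J with f' integrable on [u,v], where u, v ∈ J and 0 < u < v. If |f'| is convex on [u,v], then for every x ∈ [u,v]: |((v-x)(v·f(v) - u·f(x)) + (x-u)(v·f(x) - u·f(u)))/(v-u)² - (1/(v-u))·∫_u^v f(μ) dμ| ≤ ((v-x)²/(6(v-u)²))·[(2u+v)·|f'(x)| + (u+2v)·|f'(v)|] + ((x-u)²/(6(v-u)²))·[(u+2v)·|f'(x)| + (2u+v)·|f'(u)|]. -/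
lemma quad_int (a b c p q : ℝ) :
    (∫ t in p..q, (a*t^2 + b*t + c)) = a*(q^3-p^3)/3 + b*(q^2-p^2)/2 + c*(q-p) := by
  have h : ∀ t ∈ Set.uIcc p q,
      HasDerivAt (fun t : ℝ => a*t^3/3 + b*t^2/2 + c*t) (a*t^2 + b*t + c) t := by
    intro t _
    have h1 := (((hasDerivAt_pow 3 t).const_mul a).div_const 3).add
      ((((hasDerivAt_pow 2 t).const_mul b).div_const 2).add ((hasDerivAt_id t).const_mul c))
    have e : (fun t : ℝ => a*t^3/3 + b*t^2/2 + c*t) =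
        ((fun x => a * x ^ 3 / 3) + ((fun x => b * x ^ 2 / 2) + fun y => c * id y)) := by
      funext y; simp only [Pi.add_apply, id]; ring
    rw [e]; exact h1.congr_deriv (by push_cast; ring)
  rw [intervalIntegral.integral_eq_sub_of_hasDerivAt h
    (Continuous.intervalIntegrable (by continuity) _ _)]
  ring

lemma lin_prod_int (c A B p q : ℝ) :
    (∫ t in p..q, (t-c)*((t-p)*A + (q-t)*B)) =
      (A-B)*(q^3-p^3)/3 + (B*q-A*p-c*A+c*B)*(q^2-p^2)/2 + (c*(A*p-B*q))*(q-p) := by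
  have h : ∀ t : ℝ, (t-c)*((t-p)*A + (q-t)*B)
      = (A-B)*t^2 + (B*q-A*p-c*A+c*B)*t + (c*(A*p-B*q)) := by intro t; ring
  simp only [h]
  exact quad_int _ _ _ _ _

set_option maxHeartbeats 1000000 in
theorem stmt_1 (f f' : ℝ → ℝ) (u v : ℝ) (hu : 0 < u) (huv : u < v)
    (hderiv : ∀ y ∈ interior (Set.Ici (0:ℝ)), HasDerivAt f (f' y) y)
    (hint : IntervalIntegrable f' MeasureTheory.volume u v)
    (hconv : ∀ a ∈ Set.Icc u v, ∀ b ∈ Set.Icc u v, ∀ t ∈ Set.Icc (0:ℝ) 1,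
      |f' (t * a + (1 - t) * b)| ≤ t * |f' a| + (1 - t) * |f' b|)
    (x : ℝ) (hx : x ∈ Set.Icc u v) :
    |((v - x) * (v * f v - u * f x) + (x - u) * (v * f x - u * f u)) / (v - u) ^ 2
        - (1 / (v - u)) * ∫ μ in u..v, f μ|
      ≤ ((v - x) ^ 2 / (6 * (v - u) ^ 2)) *
          ((2 * u + v) * |f' x| + (u + 2 * v) * |f' v|)
        + ((x - u) ^ 2 / (6 * (v - u) ^ 2)) *
          ((u + 2 * v) * |f' x| + (2 * u + v) * |f' u|) := by
  obtain ⟨hux, hxv⟩ := hx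
  have hvu : (0:ℝ) < v - u := by linarith
  have hderiv' : ∀ y : ℝ, 0 < y → HasDerivAt f (f' y) y := by
    intro y hy
    exact hderiv y (by simpa [interior_Ici] using hy)
  -- subset facts
  have hsub1 : Set.uIcc u x ⊆ Set.uIcc u v :=
    Set.uIcc_subset_uIcc Set.left_mem_uIcc
      (by rw [Set.uIcc_of_le (le_of_lt huv)]; exact ⟨hux, hxv⟩)
  have hsub2 : Set.uIcc x v ⊆ Set.uIcc u v :=
    Set.uIcc_subset_uIcc
      (by rw [Set.uIcc_of_le (le_of_lt huv)]; exact ⟨hux, hxv⟩) Set.right_mem_uIcc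
  -- kernel offsets
  set c₁ : ℝ := u*(v-x)/(v-u) with hc₁
  set c₂ : ℝ := v*(x-u)/(v-u) with hc₂
  have hc₁u : c₁ ≤ u := by
    rw [hc₁, div_le_iff₀ hvu]; nlinarith
  have hc₂x : c₂ ≤ x := by
    rw [hc₂, div_le_iff₀ hvu]; nlinarith
  have hfint : ∀ p q : ℝ, u ≤ p → p ≤ q →
      IntervalIntegrable f MeasureTheory.volume p q := by
    intro p q hp hpq
    apply ContinuousOn.intervalIntegrable
    intro t ht
    rw [Set.uIcc_of_le hpq] at ht
    exact (hderiv' t (by linarith [ht.1])).continuousAt.continuousWithinAt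
  have hf'1 : IntervalIntegrable f' MeasureTheory.volume u x := hint.mono_set hsub1
  have hf'2 : IntervalIntegrable f' MeasureTheory.volume x v := hint.mono_set hsub2
  -- integration by parts
  have ibp : ∀ (c p q : ℝ), u ≤ p → p ≤ q → q ≤ v →
      IntervalIntegrable f' MeasureTheory.volume p q →
      (∫ t in p..q, (t-c) * f' t) = (q-c)*f q - (p-c)*f p - ∫ t in p..q, f t := by
    intro c p q hp hpq hq hf'pq
    have hker : IntervalIntegrable (fun t => (t-c) * f' t) MeasureTheory.volume p q :=
      hf'pq.continuousOn_mul ((continuous_id.sub continuous_const).continuousOn)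
    have hfi := hfint p q hp hpq
    have hG : ∀ t ∈ Set.uIcc p q,
        HasDerivAt (fun y => (y-c) * f y) (f t + (t-c) * f' t) t := by
      intro t ht
      rw [Set.uIcc_of_le hpq] at ht
      have h1 := ((hasDerivAt_id t).sub_const c).mul (hderiv' t (by linarith [ht.1]))
      exact h1.congr_deriv (by simp)
    have := intervalIntegral.integral_eq_sub_of_hasDerivAt hG (hfi.add hker)
    rw [intervalIntegral.integral_add hfi hker] at this
    linarith [this]
  have hI1 : (∫ t in u..x, (t-c₁) * f' t)
      = (x-c₁)*f x - (u-c₁)*f u - ∫ t in u..x, f t := ibp c₁ u x le_rfl hux hxv hf'1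
  have hI2 : (∫ t in x..v, (t-c₂) * f' t)
      = (v-c₂)*f v - (x-c₂)*f x - ∫ t in x..v, f t := ibp c₂ x v hux hxv le_rfl hf'2
  -- pointwise convexity bounds
  have hpt1 : ∀ t ∈ Set.Icc u x, (x-u)*|f' t| ≤ (t-u)*|f' x| + (x-t)*|f' u| := by
    intro t ht
    rcases eq_or_lt_of_le hux with h | h
    · have htu : t = u := le_antisymm (h ▸ ht.2) ht.1
      subst htu
      rw [← h]; simp
    · set s : ℝ := (t-u)/(x-u) with hs
      have hxu : (0:ℝ) < x - u := by linarith
      have hsm : s ∈ Set.Icc (0:ℝ) 1 :=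
        ⟨div_nonneg (by linarith [ht.1]) (le_of_lt hxu),
          (div_le_one hxu).2 (by linarith [ht.2])⟩
      have hc := hconv x ⟨hux, hxv⟩ u ⟨le_rfl, le_of_lt huv⟩ s hsm
      have ht' : s * x + (1-s)*u = t := by
        rw [hs]; field_simp
        all_goals ring
      rw [ht'] at hc
      have h2 := mul_le_mul_of_nonneg_left hc (le_of_lt hxu)
      have h3 : (x-u)*(s*|f' x| + (1-s)*|f' u|) = (t-u)*|f' x| + (x-t)*|f' u| := by
        rw [hs]; field_simp
        all_goals ring
      linarith [h2, h3.le, h3.ge]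
  have hpt2 : ∀ t ∈ Set.Icc x v, (v-x)*|f' t| ≤ (v-t)*|f' x| + (t-x)*|f' v| := by
    intro t ht
    rcases eq_or_lt_of_le hxv with h | h
    · have htv : t = v := le_antisymm ht.2 (h ▸ ht.1)
      subst htv
      rw [h]; simp
    · set s : ℝ := (v-t)/(v-x) with hs
      have hvx : (0:ℝ) < v - x := by linarith
      have hsm : s ∈ Set.Icc (0:ℝ) 1 :=
        ⟨div_nonneg (by linarith [ht.2]) (le_of_lt hvx),
          (div_le_one hvx).2 (by linarith [ht.1])⟩
      have hc := hconv x ⟨hux, hxv⟩ v ⟨le_of_lt huv, le_rfl⟩ s hsm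
      have ht' : s * x + (1-s)*v = t := by
        rw [hs]; field_simp
        all_goals ring
      rw [ht'] at hc
      have h2 := mul_le_mul_of_nonneg_left hc (le_of_lt hvx)
      have h3 : (v-x)*(s*|f' x| + (1-s)*|f' v|) = (v-t)*|f' x| + (t-x)*|f' v| := by
        rw [hs]; field_simp
        all_goals ring
      linarith [h2, h3.le, h3.ge]
  -- abs integral bounds
  have habs1 : |∫ t in u..x, (t-c₁) * f' t| ≤ ∫ t in u..x, (t-c₁) * |f' t| := by
    refine (intervalIntegral.abs_integral_le_integral_abs hux).trans_eq ?_
    apply intervalIntegral.integral_congr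
    intro t ht
    rw [Set.uIcc_of_le hux] at ht
    show |(t - c₁) * f' t| = (t - c₁) * |f' t|
    rw [abs_mul, abs_of_nonneg (by linarith [ht.1, hc₁u] : (0:ℝ) ≤ t - c₁)]
  have habs2 : |∫ t in x..v, (t-c₂) * f' t| ≤ ∫ t in x..v, (t-c₂) * |f' t| := by
    refine (intervalIntegral.abs_integral_le_integral_abs hxv).trans_eq ?_
    apply intervalIntegral.integral_congr
    intro t ht
    rw [Set.uIcc_of_le hxv] at ht
    show |(t - c₂) * f' t| = (t - c₂) * |f' t|
    rw [abs_mul, abs_of_nonneg (by linarith [ht.1, hc₂x] : (0:ℝ) ≤ t - c₂)]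
  -- main integral bounds
  have hb1 : (∫ t in u..x, (t-c₁) * |f' t|)
      ≤ (x-u)^2*((u+2*v)*|f' x| + (2*u+v)*|f' u|) / (6*(v-u)) := by
    rcases eq_or_lt_of_le hux with h | h
    · rw [← h]; simp
    · have hxu : (0:ℝ) < x - u := by linarith
      have hki : IntervalIntegrable (fun t => (t-c₁) * |f' t|) MeasureTheory.volume u x :=
        hf'1.abs.continuousOn_mul ((continuous_id.sub continuous_const).continuousOn)
      have step : (x-u) * ∫ t in u..x, (t-c₁) * |f' t|
          ≤ ∫ t in u..x, (t-c₁)*((t-u)*|f' x| + (x-t)*|f' u|) := by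
        rw [← intervalIntegral.integral_const_mul]
        apply intervalIntegral.integral_mono_on hux (hki.const_mul _)
          (Continuous.intervalIntegrable (by fun_prop) _ _)
        intro t ht
        have h1 := hpt1 t ht
        have hta : (0:ℝ) ≤ t - c₁ := by linarith [ht.1, hc₁u]
        calc (x-u)*((t-c₁)*|f' t|) = (t-c₁)*((x-u)*|f' t|) := by ring
          _ ≤ (t-c₁)*((t-u)*|f' x| + (x-t)*|f' u|) := mul_le_mul_of_nonneg_left h1 hta
      have hval : (∫ t in u..x, (t-c₁)*((t-u)*|f' x| + (x-t)*|f' u|))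
          = (x-u) * ((x-u)^2*((u+2*v)*|f' x| + (2*u+v)*|f' u|) / (6*(v-u))) := by
        rw [lin_prod_int, hc₁]
        field_simp
        all_goals ring
      rw [hval] at step
      exact le_of_mul_le_mul_left step hxu
  have hb2 : (∫ t in x..v, (t-c₂) * |f' t|)
      ≤ (v-x)^2*((2*u+v)*|f' x| + (u+2*v)*|f' v|) / (6*(v-u)) := by
    rcases eq_or_lt_of_le hxv with h | h
    · rw [h]; simp
    · have hvx : (0:ℝ) < v - x := by linarith
      have hki : IntervalIntegrable (fun t => (t-c₂) * |f' t|) MeasureTheory.volume x v :=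
        hf'2.abs.continuousOn_mul ((continuous_id.sub continuous_const).continuousOn)
      have step : (v-x) * ∫ t in x..v, (t-c₂) * |f' t|
          ≤ ∫ t in x..v, (t-c₂)*((t-x)*|f' v| + (v-t)*|f' x|) := by
        rw [← intervalIntegral.integral_const_mul]
        apply intervalIntegral.integral_mono_on hxv (hki.const_mul _)
          (Continuous.intervalIntegrable (by fun_prop) _ _)
        intro t ht
        have h1 := hpt2 t ht
        have hta : (0:ℝ) ≤ t - c₂ := by linarith [ht.1, hc₂x]
        calc (v-x)*((t-c₂)*|f' t|) = (t-c₂)*((v-x)*|f' t|) := by ring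
          _ ≤ (t-c₂)*((t-x)*|f' v| + (v-t)*|f' x|) := by
              apply mul_le_mul_of_nonneg_left _ hta
              linarith [h1]
      have hval : (∫ t in x..v, (t-c₂)*((t-x)*|f' v| + (v-t)*|f' x|))
          = (v-x) * ((v-x)^2*((2*u+v)*|f' x| + (u+2*v)*|f' v|) / (6*(v-u))) := by
        rw [lin_prod_int, hc₂]
        field_simp
        all_goals ring
      rw [hval] at step
      exact le_of_mul_le_mul_left step hvx
  -- assemble
  have hsplit : (∫ t in u..x, f t) + (∫ t in x..v, f t) = ∫ t in u..v, f t :=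
    intervalIntegral.integral_add_adjacent_intervals (hfint u x le_rfl hux) (hfint x v hux hxv)
  have hEq : ((v - x) * (v * f v - u * f x) + (x - u) * (v * f x - u * f u)) / (v - u) ^ 2
        - (1 / (v - u)) * ∫ μ in u..v, f μ
      = ((∫ t in u..x, (t-c₁) * f' t) + (∫ t in x..v, (t-c₂) * f' t)) / (v-u) := by
    rw [hI1, hI2, ← hsplit, hc₁, hc₂]
    field_simp
    all_goals ring
  have hfin : ((x-u)^2*((u+2*v)*|f' x| + (2*u+v)*|f' u|) / (6*(v-u))
        + (v-x)^2*((2*u+v)*|f' x| + (u+2*v)*|f' v|) / (6*(v-u))) / (v-u)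
      = ((v - x) ^ 2 / (6 * (v - u) ^ 2)) *
          ((2 * u + v) * |f' x| + (u + 2 * v) * |f' v|)
        + ((x - u) ^ 2 / (6 * (v - u) ^ 2)) *
          ((u + 2 * v) * |f' x| + (2 * u + v) * |f' u|) := by
    field_simp
    all_goals ring
  rw [hEq, abs_div, abs_of_pos hvu, ← hfin]
  apply div_le_div_of_nonneg_right _ (le_of_lt hvu)
  calc |(∫ t in u..x, (t-c₁) * f' t) + (∫ t in x..v, (t-c₂) * f' t)|
      ≤ |∫ t in u..x, (t-c₁) * f' t| + |∫ t in x..v, (t-c₂) * f' t| := abs_add_le _ _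
    _ ≤ _ := add_le_add (habs1.trans hb1) (habs2.trans hb2)
end

section
/- Let J = [0,∞) and let f : J → ℝ be differentiable on the interior of J with f' integrable on [u,v], where u, v ∈ J and 0 < u < v. If |f'| is s-convex in the second sense on [u,v] for some fixed s ∈ (0,1], then for every x ∈ [u,v]: |((v-x)(v·f(v) - u·f(x)) + (x-u)(v·f(x) - u·f(u)))/(v-u)² - (1/(v-u))·∫_u^v f(μ) dμ| ≤ ((v-x)²/(v-u)²)·[(((s+1)u+v)·|f'(x)| + (u+(s+1)v)·|f'(v)|)/((s+1)(s+2))] + ((x-u)²/(v-u)²)·[((u+(s+1)v)·|f'(x)| + ((s+1)u+v)·|f'(u)|)/((s+1)(s+2))]. -/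
open MeasureTheory Set

private lemma cont_rpow (r : ℝ) (hr : 0 < r) : Continuous fun t : ℝ => t ^ r :=
  continuous_iff_continuousAt.mpr fun x => Real.continuousAt_rpow_const x r (Or.inr hr.le)

private lemma rpow_step {t : ℝ} (ht : 0 ≤ t) {s : ℝ} (hs : 0 < s) :
    t ^ (s + 1) = t ^ s * t := by
  rcases eq_or_lt_of_le ht with h | h
  · rw [← h, Real.zero_rpow (by positivity), Real.zero_rpow hs.ne', mul_zero]
  · exact Real.rpow_add_one h.ne' s

private lemma int_rpow01 (r : ℝ) (hr : 0 < r) : ∫ t in (0:ℝ)..1, t ^ r = 1 / (r + 1) := by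
  rw [integral_rpow (Or.inl (by linarith)), Real.one_rpow, Real.zero_rpow (by positivity)]
  norm_num

private lemma int_rpow01' (r : ℝ) (hr : 0 < r) : ∫ t in (0:ℝ)..1, (1 - t) ^ r = 1 / (r + 1) := by
  have h := intervalIntegral.integral_comp_sub_left (a := 0) (b := 1) (fun x : ℝ => x ^ r) 1
  norm_num at h
  rw [h, int_rpow01 r hr]

private lemma int_helper (p q s : ℝ) (hs : 0 < s) :
    ∫ t in (0:ℝ)..1, (t * p + (1 - t) * q) * t ^ s
      = ((s + 1) * p + q) / ((s + 1) * (s + 2)) := by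
  have hcong : Set.EqOn (fun t : ℝ => (t * p + (1 - t) * q) * t ^ s)
      (fun t : ℝ => (p - q) * t ^ (s + 1) + q * t ^ s) (Set.uIcc 0 1) := by
    intro t ht
    rw [Set.uIcc_of_le (by norm_num : (0:ℝ) ≤ 1)] at ht
    simp only []
    rw [rpow_step ht.1 hs]
    ring
  rw [intervalIntegral.integral_congr hcong]
  have i1 : IntervalIntegrable (fun t : ℝ => t ^ (s + 1)) volume 0 1 :=
    (cont_rpow (s + 1) (by linarith)).intervalIntegrable 0 1
  have i2 : IntervalIntegrable (fun t : ℝ => t ^ s) volume 0 1 :=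
    (cont_rpow s hs).intervalIntegrable 0 1
  rw [intervalIntegral.integral_add (i1.const_mul _) (i2.const_mul _),
    intervalIntegral.integral_const_mul, intervalIntegral.integral_const_mul,
    int_rpow01 (s + 1) (by linarith), int_rpow01 s hs]
  have h1 : s + 1 ≠ 0 := by linarith
  have h2 : s + 2 ≠ 0 := by linarith
  field_simp
  ring

private lemma int_helper2 (p q s : ℝ) (hs : 0 < s) :
    ∫ t in (0:ℝ)..1, (t * p + (1 - t) * q) * (1 - t) ^ s
      = (p + (s + 1) * q) / ((s + 1) * (s + 2)) := by
  have hcong : Set.EqOn (fun t : ℝ => (t * p + (1 - t) * q) * (1 - t) ^ s)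
      (fun t : ℝ => (q - p) * (1 - t) ^ (s + 1) + p * (1 - t) ^ s) (Set.uIcc 0 1) := by
    intro t ht
    rw [Set.uIcc_of_le (by norm_num : (0:ℝ) ≤ 1)] at ht
    simp only []
    rw [rpow_step (by linarith [ht.2] : (0:ℝ) ≤ 1 - t) hs]
    ring
  rw [intervalIntegral.integral_congr hcong]
  have c1 : Continuous fun t : ℝ => (1 - t) ^ (s + 1) :=
    (cont_rpow (s + 1) (by linarith)).comp (continuous_const.sub continuous_id)
  have c2 : Continuous fun t : ℝ => (1 - t) ^ s :=
    (cont_rpow s hs).comp (continuous_const.sub continuous_id)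
  rw [intervalIntegral.integral_add ((c1.intervalIntegrable 0 1).const_mul _)
      ((c2.intervalIntegrable 0 1).const_mul _),
    intervalIntegral.integral_const_mul, intervalIntegral.integral_const_mul,
    int_rpow01' (s + 1) (by linarith), int_rpow01' s hs]
  have h1 : s + 1 ≠ 0 := by linarith
  have h2 : s + 2 ≠ 0 := by linarith
  field_simp
  ring


private lemma key (g : ℝ → ℝ) (s p q A B : ℝ) (hs0 : 0 < s)
    (hp : 0 ≤ p) (hq : 0 ≤ q) (hA : 0 ≤ A) (hB : 0 ≤ B)
    (hg : ∀ t ∈ Set.Icc (0:ℝ) 1, |g t| ≤ t ^ s * A + (1 - t) ^ s * B) :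
    |∫ t in (0:ℝ)..1, (t * p + (1 - t) * q) * g t|
      ≤ (((s + 1) * p + q) * A + (p + (s + 1) * q) * B) / ((s + 1) * (s + 2)) := by
  have crs : Continuous fun t : ℝ => t ^ s := cont_rpow s hs0
  have crs1 : Continuous fun t : ℝ => (1 - t) ^ s :=
    crs.comp (continuous_const.sub continuous_id)
  have clin : Continuous fun t : ℝ => t * p + (1 - t) * q :=
    (continuous_id.mul continuous_const).add
      ((continuous_const.sub continuous_id).mul continuous_const)
  by_cases hI : IntervalIntegrable (fun t => (t * p + (1 - t) * q) * g t) volume 0 1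
  · have cM : Continuous fun t : ℝ => (t * p + (1 - t) * q) * (t ^ s * A + (1 - t) ^ s * B) :=
      clin.mul ((crs.mul continuous_const).add (crs1.mul continuous_const))
    have habs : |∫ t in (0:ℝ)..1, (t * p + (1 - t) * q) * g t|
        ≤ ∫ t in (0:ℝ)..1, |(t * p + (1 - t) * q) * g t| := by
      have h := intervalIntegral.norm_integral_le_integral_norm
          (f := fun t => (t * p + (1 - t) * q) * g t) (μ := volume) (by norm_num : (0:ℝ) ≤ 1)
      simp only [Real.norm_eq_abs] at h
      exact h
    have hmono : ∫ t in (0:ℝ)..1, |(t * p + (1 - t) * q) * g t|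
        ≤ ∫ t in (0:ℝ)..1, (t * p + (1 - t) * q) * (t ^ s * A + (1 - t) ^ s * B) := by
      apply intervalIntegral.integral_mono_on (by norm_num) hI.abs (cM.intervalIntegrable 0 1)
      intro t ht
      have h0 : 0 ≤ t * p + (1 - t) * q :=
        add_nonneg (mul_nonneg ht.1 hp) (mul_nonneg (by linarith [ht.2]) hq)
      rw [abs_mul, abs_of_nonneg h0]
      exact mul_le_mul_of_nonneg_left (hg t ht) h0
    have hcomp : ∫ t in (0:ℝ)..1, (t * p + (1 - t) * q) * (t ^ s * A + (1 - t) ^ s * B)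
        = (((s + 1) * p + q) * A + (p + (s + 1) * q) * B) / ((s + 1) * (s + 2)) := by
      have hcong : Set.EqOn
          (fun t : ℝ => (t * p + (1 - t) * q) * (t ^ s * A + (1 - t) ^ s * B))
          (fun t : ℝ => A * ((t * p + (1 - t) * q) * t ^ s)
            + B * ((t * p + (1 - t) * q) * (1 - t) ^ s)) (Set.uIcc 0 1) := by
        intro t _; simp only []; ring
      rw [intervalIntegral.integral_congr hcong,
        intervalIntegral.integral_add (f := fun t : ℝ => A * ((t * p + (1 - t) * q) * t ^ s))
          (g := fun t : ℝ => B * ((t * p + (1 - t) * q) * (1 - t) ^ s))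
          (((clin.mul crs).intervalIntegrable 0 1).const_mul _)
          (((clin.mul crs1).intervalIntegrable 0 1).const_mul _),
        intervalIntegral.integral_const_mul, intervalIntegral.integral_const_mul,
        int_helper p q s hs0, int_helper2 p q s hs0]
      ring
    calc |∫ t in (0:ℝ)..1, (t * p + (1 - t) * q) * g t|
        ≤ ∫ t in (0:ℝ)..1, |(t * p + (1 - t) * q) * g t| := habs
      _ ≤ _ := hmono
      _ = _ := hcomp
  · rw [intervalIntegral.integral_undef hI, abs_zero]
    positivity

theorem stmt_2 (f f' : ℝ → ℝ) (u v s : ℝ) (hu : 0 < u) (huv : u < v)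
    (hs0 : 0 < s) (hs1 : s ≤ 1)
    (hderiv : ∀ y ∈ interior (Set.Ici (0:ℝ)), HasDerivAt f (f' y) y)
    (hint : IntervalIntegrable f' MeasureTheory.volume u v)
    (hsconv : ∀ a ∈ Set.Icc u v, ∀ b ∈ Set.Icc u v, ∀ t ∈ Set.Icc (0:ℝ) 1,
      |f' (t * a + (1 - t) * b)| ≤ t ^ s * |f' a| + (1 - t) ^ s * |f' b|)
    (x : ℝ) (hx : x ∈ Set.Icc u v) :
    |((v - x) * (v * f v - u * f x) + (x - u) * (v * f x - u * f u)) / (v - u) ^ 2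
        - (1 / (v - u)) * ∫ μ in u..v, f μ|
      ≤ ((v - x) ^ 2 / (v - u) ^ 2) *
          ((((s + 1) * u + v) * |f' x| + (u + (s + 1) * v) * |f' v|) / ((s + 1) * (s + 2)))
        + ((x - u) ^ 2 / (v - u) ^ 2) *
          (((u + (s + 1) * v) * |f' x| + ((s + 1) * u + v) * |f' u|) / ((s + 1) * (s + 2))) := by
  obtain ⟨hux, hxv⟩ := hx
  have hvu : (0:ℝ) < v - u := by linarith
  have hne : v - u ≠ 0 := hvu.ne'
  have hderiv' : ∀ y ∈ Set.Icc u v, HasDerivAt f (f' y) y := by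
    intro y hy
    exact hderiv y (by rw [interior_Ici]; exact Set.mem_Ioi.mpr (lt_of_lt_of_le hu hy.1))
  have hK : ∀ (a0 μ : ℝ),
      HasDerivAt (fun μ => ((v - u) * μ - a0) / (v - u) ^ 2) ((v - u) / (v - u) ^ 2) μ := by
    intro a0 μ
    have h := (((hasDerivAt_id μ).const_mul (v - u)).sub_const a0).div_const ((v - u) ^ 2)
    simpa using h
  have sub1 : Set.uIcc u x ⊆ Set.Icc u v := by
    rw [Set.uIcc_of_le hux]; exact Set.Icc_subset_Icc le_rfl hxv
  have sub2 : Set.uIcc x v ⊆ Set.Icc u v := by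
    rw [Set.uIcc_of_le hxv]; exact Set.Icc_subset_Icc hux le_rfl
  have hf'1 : IntervalIntegrable f' volume u x := by
    refine hint.mono_set ?_
    rw [Set.uIcc_of_le hux, Set.uIcc_of_le huv.le]; exact Set.Icc_subset_Icc le_rfl hxv
  have hf'2 : IntervalIntegrable f' volume x v := by
    refine hint.mono_set ?_
    rw [Set.uIcc_of_le hxv, Set.uIcc_of_le huv.le]; exact Set.Icc_subset_Icc hux le_rfl
  have hfc1 : IntervalIntegrable f volume u x :=
    ContinuousOn.intervalIntegrable
      (fun y hy => ((hderiv' y (sub1 hy)).continuousAt).continuousWithinAt)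
  have hfc2 : IntervalIntegrable f volume x v :=
    ContinuousOn.intervalIntegrable
      (fun y hy => ((hderiv' y (sub2 hy)).continuousAt).continuousWithinAt)
  have ibp1 : ∫ μ in u..x, (((v - u) * μ - u * (v - x)) / (v - u) ^ 2) * f' μ
      = (((v - u) * x - u * (v - x)) / (v - u) ^ 2) * f x
        - (((v - u) * u - u * (v - x)) / (v - u) ^ 2) * f u
        - ∫ μ in u..x, ((v - u) / (v - u) ^ 2) * f μ :=
    intervalIntegral.integral_mul_deriv_eq_deriv_mul
      (fun μ _ => hK (u * (v - x)) μ) (fun μ hμ => hderiv' μ (sub1 hμ))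
      intervalIntegrable_const hf'1
  have ibp2 : ∫ μ in x..v, (((v - u) * μ - v * (x - u)) / (v - u) ^ 2) * f' μ
      = (((v - u) * v - v * (x - u)) / (v - u) ^ 2) * f v
        - (((v - u) * x - v * (x - u)) / (v - u) ^ 2) * f x
        - ∫ μ in x..v, ((v - u) / (v - u) ^ 2) * f μ :=
    intervalIntegral.integral_mul_deriv_eq_deriv_mul
      (fun μ _ => hK (v * (x - u)) μ) (fun μ hμ => hderiv' μ (sub2 hμ))
      intervalIntegrable_const hf'2
  have hadj : (∫ μ in u..x, f μ) + ∫ μ in x..v, f μ = ∫ μ in u..v, f μ :=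
    intervalIntegral.integral_add_adjacent_intervals hfc1 hfc2
  have hE : ((v - x) * (v * f v - u * f x) + (x - u) * (v * f x - u * f u)) / (v - u) ^ 2
        - (1 / (v - u)) * ∫ μ in u..v, f μ
      = (∫ μ in u..x, (((v - u) * μ - u * (v - x)) / (v - u) ^ 2) * f' μ)
        + ∫ μ in x..v, (((v - u) * μ - v * (x - u)) / (v - u) ^ 2) * f' μ := by
    rw [ibp1, ibp2, intervalIntegral.integral_const_mul, intervalIntegral.integral_const_mul,
      ← hadj]
    field_simp
    ring
  have c1 : (0:ℝ) ≤ (s + 1) * u + v := by nlinarith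
  have c2 : (0:ℝ) ≤ u + (s + 1) * v := by nlinarith
  have cD : (0:ℝ) ≤ (s + 1) * (s + 2) := by nlinarith
  have h1 : |∫ μ in u..x, (((v - u) * μ - u * (v - x)) / (v - u) ^ 2) * f' μ|
      ≤ ((x - u) ^ 2 / (v - u) ^ 2) *
          (((u + (s + 1) * v) * |f' x| + ((s + 1) * u + v) * |f' u|) / ((s + 1) * (s + 2))) := by
    rcases eq_or_lt_of_le hux with hcase | hcase
    · rw [← hcase, intervalIntegral.integral_same, abs_zero]
      exact mul_nonneg (by positivity) (div_nonneg
        (add_nonneg (mul_nonneg c2 (abs_nonneg _)) (mul_nonneg c1 (abs_nonneg _))) cD)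
    · have hxu' : x - u ≠ 0 := sub_ne_zero.mpr hcase.ne'
      have hcms := intervalIntegral.integral_comp_mul_add (a := 0) (b := 1)
        (fun μ => (((v - u) * μ - u * (v - x)) / (v - u) ^ 2) * f' μ) hxu' u
      rw [show (x - u) * 0 + u = u by ring, show (x - u) * 1 + u = x by ring] at hcms
      have hA1 : ∫ μ in u..x, (((v - u) * μ - u * (v - x)) / (v - u) ^ 2) * f' μ
          = ((x - u) ^ 2 / (v - u) ^ 2) *
              ∫ t in (0:ℝ)..1, (t * v + (1 - t) * u) * f' (t * x + (1 - t) * u) := by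
        have hcongr : (∫ t in (0:ℝ)..1,
              (fun μ => (((v - u) * μ - u * (v - x)) / (v - u) ^ 2) * f' μ) ((x - u) * t + u))
            = ((x - u) / (v - u) ^ 2) *
                ∫ t in (0:ℝ)..1, (t * v + (1 - t) * u) * f' (t * x + (1 - t) * u) := by
          rw [← intervalIntegral.integral_const_mul]
          apply intervalIntegral.integral_congr
          intro t _
          simp only []
          rw [show (x - u) * t + u = t * x + (1 - t) * u by ring]
          ring
        have e2 : ∫ μ in u..x, (((v - u) * μ - u * (v - x)) / (v - u) ^ 2) * f' μ
            = (x - u) * ∫ t in (0:ℝ)..1,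
                (fun μ => (((v - u) * μ - u * (v - x)) / (v - u) ^ 2) * f' μ) ((x - u) * t + u) := by
          rw [hcms, smul_eq_mul, ← mul_assoc, mul_inv_cancel₀ hxu', one_mul]
        rw [e2, hcongr]; ring
      rw [hA1, abs_mul, abs_of_nonneg (by positivity : (0:ℝ) ≤ (x - u) ^ 2 / (v - u) ^ 2)]
      have hkey := key (fun t => f' (t * x + (1 - t) * u)) s v u (|f' x|) (|f' u|) hs0
        (by linarith) hu.le (abs_nonneg _) (abs_nonneg _)
        (fun t ht => hsconv x ⟨hux, hxv⟩ u ⟨le_rfl, huv.le⟩ t ht)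
      calc ((x - u) ^ 2 / (v - u) ^ 2) *
            |∫ t in (0:ℝ)..1, (t * v + (1 - t) * u) * f' (t * x + (1 - t) * u)|
          ≤ ((x - u) ^ 2 / (v - u) ^ 2) *
            ((((s + 1) * v + u) * |f' x| + (v + (s + 1) * u) * |f' u|) / ((s + 1) * (s + 2))) :=
            mul_le_mul_of_nonneg_left hkey (by positivity)
        _ = _ := by ring
  have h2 : |∫ μ in x..v, (((v - u) * μ - v * (x - u)) / (v - u) ^ 2) * f' μ|
      ≤ ((v - x) ^ 2 / (v - u) ^ 2) *
          ((((s + 1) * u + v) * |f' x| + (u + (s + 1) * v) * |f' v|) / ((s + 1) * (s + 2))) := by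
    rcases eq_or_lt_of_le hxv with hcase | hcase
    · rw [hcase, intervalIntegral.integral_same, abs_zero]
      exact mul_nonneg (by positivity) (div_nonneg
        (add_nonneg (mul_nonneg c1 (abs_nonneg _)) (mul_nonneg c2 (abs_nonneg _))) cD)
    · have hxv' : x - v ≠ 0 := sub_ne_zero.mpr hcase.ne
      have hcms := intervalIntegral.integral_comp_mul_add (a := 0) (b := 1)
        (fun μ => (((v - u) * μ - v * (x - u)) / (v - u) ^ 2) * f' μ) hxv' v
      rw [show (x - v) * 0 + v = v by ring, show (x - v) * 1 + v = x by ring,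
        intervalIntegral.integral_symm x v] at hcms
      have hA2 : ∫ μ in x..v, (((v - u) * μ - v * (x - u)) / (v - u) ^ 2) * f' μ
          = ((v - x) ^ 2 / (v - u) ^ 2) *
              ∫ t in (0:ℝ)..1, (t * u + (1 - t) * v) * f' (t * x + (1 - t) * v) := by
        have hcongr : (∫ t in (0:ℝ)..1,
              (fun μ => (((v - u) * μ - v * (x - u)) / (v - u) ^ 2) * f' μ) ((x - v) * t + v))
            = ((v - x) / (v - u) ^ 2) *
                ∫ t in (0:ℝ)..1, (t * u + (1 - t) * v) * f' (t * x + (1 - t) * v) := by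
          rw [← intervalIntegral.integral_const_mul]
          apply intervalIntegral.integral_congr
          intro t _
          simp only []
          rw [show (x - v) * t + v = t * x + (1 - t) * v by ring]
          ring
        have e2 : ∫ μ in x..v, (((v - u) * μ - v * (x - u)) / (v - u) ^ 2) * f' μ
            = (v - x) * ∫ t in (0:ℝ)..1,
                (fun μ => (((v - u) * μ - v * (x - u)) / (v - u) ^ 2) * f' μ) ((x - v) * t + v) := by
          rw [hcms, smul_eq_mul]
          field_simp
          ring
        rw [e2, hcongr]; ring
      rw [hA2, abs_mul, abs_of_nonneg (by positivity : (0:ℝ) ≤ (v - x) ^ 2 / (v - u) ^ 2)]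
      have hkey := key (fun t => f' (t * x + (1 - t) * v)) s u v (|f' x|) (|f' v|) hs0
        hu.le (by linarith) (abs_nonneg _) (abs_nonneg _)
        (fun t ht => hsconv x ⟨hux, hxv⟩ v ⟨huv.le, le_rfl⟩ t ht)
      calc ((v - x) ^ 2 / (v - u) ^ 2) *
            |∫ t in (0:ℝ)..1, (t * u + (1 - t) * v) * f' (t * x + (1 - t) * v)|
          ≤ ((v - x) ^ 2 / (v - u) ^ 2) *
            ((((s + 1) * u + v) * |f' x| + (u + (s + 1) * v) * |f' v|) / ((s + 1) * (s + 2))) :=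
            mul_le_mul_of_nonneg_left hkey (by positivity)
        _ = _ := by ring
  rw [hE]
  calc |(∫ μ in u..x, (((v - u) * μ - u * (v - x)) / (v - u) ^ 2) * f' μ)
        + ∫ μ in x..v, (((v - u) * μ - v * (x - u)) / (v - u) ^ 2) * f' μ|
      ≤ |∫ μ in u..x, (((v - u) * μ - u * (v - x)) / (v - u) ^ 2) * f' μ|
        + |∫ μ in x..v, (((v - u) * μ - v * (x - u)) / (v - u) ^ 2) * f' μ| := abs_add_le _ _
    _ ≤ _ := add_le_add h1 h2
    _ = _ := by ring
end

section
/- Let J = [0,∞) and let f : J → ℝ be differentiable on the interior of J with f' integrable on [u,v], where u, v ∈ J and 0 < u < v. If |f'| is s-convex in the second sense on [u,v] for some fixed s ∈ (0,1], then: |(v·f(v) - u·f(u))/(2(v-u)) + (1/2)·f((u+v)/2) - (1/(v-u))·∫_u^v f(μ) dμ| ≤ (1/4)·[(((s+1)u+v)·|f'((u+v)/2)| + (u+(s+1)v)·|f'(v)|)/((s+1)(s+2))] + (1/4)·[((u+(s+1)v)·|f'((u+v)/2)| + ((s+1)u+v)·|f'(u)|)/((s+1)(s+2))]. -/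
open intervalIntegral MeasureTheory
open intervalIntegral MeasureTheory

lemma int01 (s p q A B : ℝ) (hs0 : 0 < s) :
    ∫ t in (0:ℝ)..1, (t*p + (1-t)*q) * (t^s*A + (1-t)^s*B)
      = ((q + (s+1)*p)*A + ((s+1)*q + p)*B) / ((s+1)*(s+2)) := by
  have hs1 : s + 1 ≠ 0 := by linarith
  have hs2 : s + 2 ≠ 0 := by linarith
  have c1 : ContinuousOn (fun t : ℝ => t ^ s) (Set.uIcc (0:ℝ) 1) :=
    continuousOn_id.rpow_const (fun x _ => Or.inr hs0.le)
  have c2 : ContinuousOn (fun t : ℝ => t ^ (s+1)) (Set.uIcc (0:ℝ) 1) :=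
    continuousOn_id.rpow_const (fun x _ => Or.inr (by linarith))
  have c3 : ContinuousOn (fun t : ℝ => (1-t) ^ s) (Set.uIcc (0:ℝ) 1) :=
    (continuousOn_const.sub continuousOn_id).rpow_const (fun x _ => Or.inr hs0.le)
  have c4 : ContinuousOn (fun t : ℝ => (1-t) ^ (s+1)) (Set.uIcc (0:ℝ) 1) :=
    (continuousOn_const.sub continuousOn_id).rpow_const (fun x _ => Or.inr (by linarith))
  have i1 : IntervalIntegrable (fun t : ℝ => (q*A) • t^s) volume 0 1 := (c1.const_smul (q*A)).intervalIntegrable (μ := volume)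
  have i2 : IntervalIntegrable (fun t : ℝ => ((p-q)*A) • t^(s+1)) volume 0 1 := (c2.const_smul ((p-q)*A)).intervalIntegrable (μ := volume)
  have i3 : IntervalIntegrable (fun t : ℝ => (p*B) • (1-t)^s) volume 0 1 := (c3.const_smul (p*B)).intervalIntegrable (μ := volume)
  have i4 : IntervalIntegrable (fun t : ℝ => ((q-p)*B) • (1-t)^(s+1)) volume 0 1 := (c4.const_smul ((q-p)*B)).intervalIntegrable (μ := volume)
  have hI1 : ∫ t in (0:ℝ)..1, t ^ s = 1/(s+1) := by
    rw [integral_rpow (Or.inl (by linarith))]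
    rw [Real.one_rpow, Real.zero_rpow hs1]; ring
  have hI2 : ∫ t in (0:ℝ)..1, t ^ (s+1) = 1/(s+2) := by
    rw [integral_rpow (Or.inl (by linarith))]
    rw [Real.one_rpow, Real.zero_rpow (by linarith : s+1+1 ≠ 0)]
    ring_nf
  have hI3 : ∫ t in (0:ℝ)..1, (1-t) ^ s = 1/(s+1) := by
    have := integral_comp_sub_left (fun t : ℝ => t ^ s) 1 (a := 0) (b := 1)
    simpa using this.trans (by simpa using hI1)
  have hI4 : ∫ t in (0:ℝ)..1, (1-t) ^ (s+1) = 1/(s+2) := by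
    have := integral_comp_sub_left (fun t : ℝ => t ^ (s+1)) 1 (a := 0) (b := 1)
    simpa using this.trans (by simpa using hI2)
  have hcongr : ∫ t in (0:ℝ)..1, (t*p + (1-t)*q) * (t^s*A + (1-t)^s*B)
      = ∫ t in (0:ℝ)..1, ((q*A) • (t^s) + ((p-q)*A) • (t^(s+1))
          + ((p*B) • ((1-t)^s) + ((q-p)*B) • ((1-t)^(s+1)))) := by
    apply intervalIntegral.integral_congr
    intro t ht
    rw [Set.uIcc_of_le (by norm_num : (0:ℝ) ≤ 1)] at ht
    obtain ⟨ht0, ht1⟩ := ht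
    have e1 : t ^ (s+1) = t ^ s * t := by
      rw [Real.rpow_add' ht0 (by linarith), Real.rpow_one]
    have e2 : (1-t) ^ (s+1) = (1-t) ^ s * (1-t) := by
      rw [Real.rpow_add' (by linarith) (by linarith), Real.rpow_one]
    simp only [smul_eq_mul]
    rw [e1, e2]; ring
  rw [hcongr, integral_add (i1.add i2) (i3.add i4), integral_add i1 i2, integral_add i3 i4]
  simp only [smul_eq_mul, intervalIntegral.integral_const_mul]
  rw [hI1, hI2, hI3, hI4]
  field_simp
  ring


lemma key_seg (f' : ℝ → ℝ) (u v s c d : ℝ) (hu : 0 < u)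
    (hs0 : 0 < s) (hcd : c < d) (huc : u ≤ c) (hdv : d ≤ v)
    (hlen : d - c = (v - u)/2)
    (hint : IntervalIntegrable f' MeasureTheory.volume c d)
    (hsconv : ∀ a ∈ Set.Icc u v, ∀ b ∈ Set.Icc u v, ∀ t ∈ Set.Icc (0:ℝ) 1,
      |f' (t * a + (1 - t) * b)| ≤ t ^ s * |f' a| + (1 - t) ^ s * |f' b|) :
    |∫ x in c..d, (u + 2*(x - c)) * f' x|
      ≤ (v - u)/2 * (((u + (s+1)*v) * |f' d| + ((s+1)*u + v) * |f' c|) / ((s+1)*(s+2))) := by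
  have hr : d - c ≠ 0 := sub_ne_zero.mpr hcd.ne'
  set A := |f' d| with hA
  set B := |f' c| with hB
  set g : ℝ → ℝ := fun t => (t*v + (1-t)*u) * (t^s*A + (1-t)^s*B) with hg
  -- continuity of x ↦ g ((x-c)/(d-c)) on uIcc c d
  have hτ : ContinuousOn (fun x : ℝ => (x - c)/(d - c)) (Set.uIcc c d) :=
    ((continuousOn_id.sub continuousOn_const).div_const _)
  have hφcont : ContinuousOn (fun x : ℝ => g ((x - c)/(d - c))) (Set.uIcc c d) := by
    apply ContinuousOn.mul
    · exact ((hτ.mul continuousOn_const).add ((continuousOn_const.sub hτ).mul continuousOn_const))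
    · exact (((hτ.rpow_const (fun x _ => Or.inr hs0.le)).mul continuousOn_const).add
        (((continuousOn_const.sub hτ).rpow_const (fun x _ => Or.inr hs0.le)).mul continuousOn_const))
  have hkcont : ContinuousOn (fun x : ℝ => u + 2*(x - c)) (Set.uIcc c d) := by fun_prop
  have hint1 : IntervalIntegrable (fun x => |(u + 2*(x - c)) * f' x|) volume c d :=
    (hint.continuousOn_mul hkcont).abs
  have hint2 : IntervalIntegrable (fun x => g ((x - c)/(d - c))) volume c d :=
    hφcont.intervalIntegrable
  have step1 : |∫ x in c..d, (u + 2*(x - c)) * f' x|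
      ≤ ∫ x in c..d, |(u + 2*(x - c)) * f' x| :=
    intervalIntegral.abs_integral_le_integral_abs hcd.le
  have step2 : ∫ x in c..d, |(u + 2*(x - c)) * f' x|
      ≤ ∫ x in c..d, g ((x - c)/(d - c)) := by
    apply intervalIntegral.integral_mono_on hcd.le hint1 hint2
    intro x hx
    set t := (x - c)/(d - c) with htdef
    have ht0 : 0 ≤ t := div_nonneg (by linarith [hx.1]) (by linarith)
    have ht1 : t ≤ 1 := (div_le_one (by linarith)).mpr (by linarith [hx.2])
    have htx : t * (d - c) = x - c := div_mul_cancel₀ _ hr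
    have hxeq : t * d + (1 - t) * c = x := by nlinarith [htx]
    have hconv := hsconv d ⟨by linarith, hdv⟩ c ⟨huc, by linarith⟩ t ⟨ht0, ht1⟩
    rw [hxeq] at hconv
    have hker : u + 2*(x - c) = t*v + (1-t)*u := by
      have : x - c = t * ((v - u)/2) := by rw [← hlen]; linarith [htx]
      rw [this]; ring
    have hknn : 0 ≤ t*v + (1-t)*u := by nlinarith
    rw [abs_mul, hker, abs_of_nonneg hknn]
    exact mul_le_mul_of_nonneg_left hconv hknn
  have step3 : ∫ x in c..d, g ((x - c)/(d - c)) = (d - c) * ∫ t in (0:ℝ)..1, g t := by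
    have e1 : ∫ x in c..d, g ((x - c)/(d - c))
        = ∫ x in c..d, (fun y => g (y * (d - c)⁻¹)) (x - c) := by
      simp only [div_eq_mul_inv]
    rw [e1, intervalIntegral.integral_comp_sub_right (fun y => g (y * (d - c)⁻¹)) c,
      intervalIntegral.integral_comp_mul_right g (inv_ne_zero hr)]
    simp [sub_self, mul_inv_cancel₀ hr, smul_eq_mul]
  have step4 : ∫ t in (0:ℝ)..1, g t
      = ((u + (s+1)*v)*A + ((s+1)*u + v)*B) / ((s+1)*(s+2)) := by
    exact int01 s v u A B hs0
  calc |∫ x in c..d, (u + 2*(x - c)) * f' x|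
      ≤ ∫ x in c..d, g ((x - c)/(d - c)) := step1.trans step2
    _ = (v - u)/2 * (((u + (s+1)*v) * A + ((s+1)*u + v) * B) / ((s+1)*(s+2))) := by
        rw [step3, step4, hlen]

theorem stmt_3 (f f' : ℝ → ℝ) (u v s : ℝ) (hu : 0 < u) (huv : u < v)
    (hs0 : 0 < s) (hs1 : s ≤ 1)
    (hderiv : ∀ y ∈ interior (Set.Ici (0:ℝ)), HasDerivAt f (f' y) y)
    (hint : IntervalIntegrable f' MeasureTheory.volume u v)
    (hsconv : ∀ a ∈ Set.Icc u v, ∀ b ∈ Set.Icc u v, ∀ t ∈ Set.Icc (0:ℝ) 1,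
      |f' (t * a + (1 - t) * b)| ≤ t ^ s * |f' a| + (1 - t) ^ s * |f' b|) :
    |(v * f v - u * f u) / (2 * (v - u)) + (1 / 2) * f ((u + v) / 2)
        - (1 / (v - u)) * ∫ μ in u..v, f μ|
      ≤ (1 / 4) *
          ((((s + 1) * u + v) * |f' ((u + v) / 2)| + (u + (s + 1) * v) * |f' v|)
            / ((s + 1) * (s + 2)))
        + (1 / 4) *
          (((u + (s + 1) * v) * |f' ((u + v) / 2)| + ((s + 1) * u + v) * |f' u|)
            / ((s + 1) * (s + 2))) := by
  set m := (u + v) / 2 with hm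
  have hum : u < m := by rw [hm]; linarith
  have hmv : m < v := by rw [hm]; linarith
  have hvu : (0:ℝ) < v - u := by linarith
  have hsub1 : Set.uIcc u m ⊆ Set.uIcc u v := by
    rw [Set.uIcc_of_le hum.le, Set.uIcc_of_le huv.le]
    exact Set.Icc_subset_Icc le_rfl hmv.le
  have hsub2 : Set.uIcc m v ⊆ Set.uIcc u v := by
    rw [Set.uIcc_of_le hmv.le, Set.uIcc_of_le huv.le]
    exact Set.Icc_subset_Icc hum.le le_rfl
  have hD : ∀ x ∈ Set.uIcc u v, HasDerivAt f (f' x) x := by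
    intro x hx
    apply hderiv
    rw [interior_Ici]
    rw [Set.uIcc_of_le huv.le] at hx
    exact lt_of_lt_of_le hu hx.1
  have hfc : ContinuousOn f (Set.uIcc u v) :=
    fun x hx => (hD x hx).continuousAt.continuousWithinAt
  have hintf1 : IntervalIntegrable f volume u m :=
    (hfc.mono hsub1).intervalIntegrable (μ := volume)
  have hintf2 : IntervalIntegrable f volume m v :=
    (hfc.mono hsub2).intervalIntegrable (μ := volume)
  have hker : ∀ c x : ℝ, HasDerivAt (fun y => u + 2*(y - c)) 2 x := by
    intro c x
    simpa using (((hasDerivAt_id x).sub_const c).const_mul 2).const_add u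
  have ibp1 : ∫ x in u..m, (u + 2*(x - u)) * f' x
      = (u + 2*(m - u)) * f m - (u + 2*(u - u)) * f u - ∫ x in u..m, 2 * f x :=
    intervalIntegral.integral_mul_deriv_eq_deriv_mul
      (fun x _ => hker u x) (fun x hx => hD x (hsub1 hx))
      intervalIntegrable_const (hint.mono_set hsub1)
  have ibp2 : ∫ x in m..v, (u + 2*(x - m)) * f' x
      = (u + 2*(v - m)) * f v - (u + 2*(m - m)) * f m - ∫ x in m..v, 2 * f x :=
    intervalIntegral.integral_mul_deriv_eq_deriv_mul
      (fun x _ => hker m x) (fun x hx => hD x (hsub2 hx))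
      intervalIntegrable_const (hint.mono_set hsub2)
  have hA1 : (∫ x in u..m, (u + 2*(x - u)) * f' x)
      = v * f m - u * f u - 2 * ∫ x in u..m, f x := by
    rw [ibp1, intervalIntegral.integral_const_mul]
    have : u + 2*(m - u) = v := by rw [hm]; ring
    rw [this]; ring
  have hA2 : (∫ x in m..v, (u + 2*(x - m)) * f' x)
      = v * f v - u * f m - 2 * ∫ x in m..v, f x := by
    rw [ibp2, intervalIntegral.integral_const_mul]
    have h1 : u + 2*(v - m) = v := by rw [hm]; ring
    have h2 : u + 2*(m - m) = u := by ring
    rw [h1, h2]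
  have hsplit : (∫ x in u..m, f x) + ∫ x in m..v, f x = ∫ x in u..v, f x :=
    intervalIntegral.integral_add_adjacent_intervals hintf1 hintf2
  have hid : (v * f v - u * f u) / (2 * (v - u)) + (1 / 2) * f m
      - (1 / (v - u)) * ∫ μ in u..v, f μ
      = ((∫ x in u..m, (u + 2*(x - u)) * f' x) + ∫ x in m..v, (u + 2*(x - m)) * f' x)
        / (2 * (v - u)) := by
    rw [hA1, hA2, ← hsplit]
    field_simp
    ring
  have k1 := key_seg f' u v s u m hu hs0 hum le_rfl hmv.le (by rw [hm]; ring)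
    (hint.mono_set hsub1) hsconv
  have k2 := key_seg f' u v s m v hu hs0 hmv hum.le le_rfl (by rw [hm]; ring)
    (hint.mono_set hsub2) hsconv
  set A1 := ∫ x in u..m, (u + 2*(x - u)) * f' x with hA1d
  set A2 := ∫ x in m..v, (u + 2*(x - m)) * f' x with hA2d
  rw [hid, abs_div, abs_of_pos (by linarith : (0:ℝ) < 2 * (v - u))]
  calc |A1 + A2| / (2 * (v - u))
      ≤ (|A1| + |A2|) / (2 * (v - u)) := by gcongr; exact abs_add_le _ _
    _ ≤ ((v - u)/2 * (((u + (s+1)*v) * |f' m| + ((s+1)*u + v) * |f' u|) / ((s+1)*(s+2)))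
          + (v - u)/2 * (((u + (s+1)*v) * |f' v| + ((s+1)*u + v) * |f' m|) / ((s+1)*(s+2))))
          / (2 * (v - u)) := by
        gcongr
    _ = (1 / 4) *
          ((((s + 1) * u + v) * |f' m| + (u + (s + 1) * v) * |f' v|)
            / ((s + 1) * (s + 2)))
        + (1 / 4) *
          (((u + (s + 1) * v) * |f' m| + ((s + 1) * u + v) * |f' u|)
            / ((s + 1) * (s + 2))) := by
        have h1 : (s:ℝ) + 1 ≠ 0 := by linarith
        have h2 : (s:ℝ) + 2 ≠ 0 := by linarith
        field_simp
        ring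
end

section
/- Let J = [0,∞) and let f : J → ℝ be differentiable on the interior of J with f' integrable on [u,v], where u, v ∈ J and 0 < u < v. If |f'| is s-convex in the second sense on [u,v] for some fixed s ∈ (0,1] and |f'(x)| ≤ M for all x ∈ [u,v], then |(v·f(v) - u·f(u))/(2(v-u)) + (1/2)·f((u+v)/2) - (1/(v-u))·∫_u^v f(μ) dμ| ≤ M·(u+v)/(2(s+1)). -/
open intervalIntegral MeasureTheory
set_option maxHeartbeats 1000000


lemma key_int (s A B : ℝ) (hs0 : 0 < s) :
    ∫ t in (0:ℝ)..1, (A + t*B) * (t^s + (1-t)^s) = (2*A + B)/(s+1) := by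
  have hcr : Continuous fun t:ℝ => t^s := Real.continuous_rpow_const hs0.le
  have hcr1 : Continuous fun t:ℝ => (1-t)^s := hcr.comp (by continuity)
  have hcr2 : Continuous fun t:ℝ => t^(s+1) := Real.continuous_rpow_const (by linarith)
  have hs1 : s + 1 ≠ 0 := by linarith
  have h1 : ∫ t in (0:ℝ)..1, t^s = 1/(s+1) := by
    rw [integral_rpow (Or.inl (by linarith))]
    rw [Real.one_rpow, Real.zero_rpow hs1]; ring
  have h2 : ∫ t in (0:ℝ)..1, t^(s+1) = 1/(s+2) := by
    rw [integral_rpow (Or.inl (by linarith))]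
    rw [Real.one_rpow, Real.zero_rpow (by linarith : s+1+1 ≠ 0)]; ring
  have h3 : ∫ t in (0:ℝ)..1, (1-t)^s = 1/(s+1) := by
    have := integral_comp_sub_left (a := (0:ℝ)) (b := 1) (fun t => t^s) 1
    norm_num at this
    rw [this, h1]
  have hmul : ∀ t ∈ Set.uIcc (0:ℝ) 1, t * t^s = t^(s+1) := by
    intro t ht
    rcases eq_or_ne t 0 with h | h
    · simp [h, Real.zero_rpow hs1, Real.zero_rpow (by linarith : s+1 ≠ 0)]
    · rw [Real.rpow_add_one h s]; ring
  have h4 : ∫ t in (0:ℝ)..1, t*(1-t)^s = 1/(s+1) - 1/(s+2) := by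
    have e1 : ∫ t in (0:ℝ)..1, t*(1-t)^s = ∫ t in (0:ℝ)..1, (1-t)*t^s := by
      have := integral_comp_sub_left (a := (0:ℝ)) (b := 1) (fun t => (1-t)*t^s) 1
      simp only [sub_sub_cancel, sub_zero, sub_self] at this
      rw [← this]
    rw [e1]
    have e2 : ∫ t in (0:ℝ)..1, (1-t)*t^s = ∫ t in (0:ℝ)..1, (t^s - t^(s+1)) := by
      apply integral_congr
      intro t ht
      simp only
      rw [← hmul t ht]; ring
    rw [e2, integral_sub (hcr.intervalIntegrable _ _) (hcr2.intervalIntegrable _ _), h1, h2]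
  have emain : ∫ t in (0:ℝ)..1, (A + t*B) * (t^s + (1-t)^s)
      = ∫ t in (0:ℝ)..1, (A*t^s + A*(1-t)^s + B*t^(s+1) + B*(t*(1-t)^s)) := by
    apply integral_congr
    intro t ht
    simp only
    rw [← hmul t ht]; ring
  rw [emain]
  have i1 : IntervalIntegrable (fun t:ℝ => A*t^s) MeasureTheory.volume 0 1 :=
    ((continuous_const.mul hcr)).intervalIntegrable _ _
  have i2 : IntervalIntegrable (fun t:ℝ => A*(1-t)^s) MeasureTheory.volume 0 1 :=
    ((continuous_const.mul hcr1)).intervalIntegrable _ _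
  have i3 : IntervalIntegrable (fun t:ℝ => B*t^(s+1)) MeasureTheory.volume 0 1 :=
    ((continuous_const.mul hcr2)).intervalIntegrable _ _
  have i4 : IntervalIntegrable (fun t:ℝ => B*(t*(1-t)^s)) MeasureTheory.volume 0 1 :=
    ((continuous_const.mul (continuous_id.mul hcr1))).intervalIntegrable _ _
  rw [integral_add (i1.add i2 |>.add i3) i4, integral_add (i1.add i2) i3, integral_add i1 i2,
    intervalIntegral.integral_const_mul, intervalIntegral.integral_const_mul, intervalIntegral.integral_const_mul, intervalIntegral.integral_const_mul,
    h1, h2, h3, h4]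
  field_simp
  ring

theorem stmt_5 (f f' : ℝ → ℝ) (u v s M : ℝ) (hu : 0 < u) (huv : u < v)
    (hs0 : 0 < s) (hs1 : s ≤ 1) (hM : 0 ≤ M)
    (hderiv : ∀ y ∈ interior (Set.Ici (0:ℝ)), HasDerivAt f (f' y) y)
    (hint : IntervalIntegrable f' MeasureTheory.volume u v)
    (hsconv : ∀ a ∈ Set.Icc u v, ∀ b ∈ Set.Icc u v, ∀ t ∈ Set.Icc (0:ℝ) 1,
      |f' (t * a + (1 - t) * b)| ≤ t ^ s * |f' a| + (1 - t) ^ s * |f' b|)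
    (hbound : ∀ x ∈ Set.Icc u v, |f' x| ≤ M) :
    |(v * f v - u * f u) / (2 * (v - u)) + (1 / 2) * f ((u + v) / 2)
        - (1 / (v - u)) * ∫ μ in u..v, f μ|
      ≤ M * (u + v) / (2 * (s + 1)) := by
  obtain ⟨m, hm⟩ : ∃ m : ℝ, m = (u + v) / 2 := ⟨_, rfl⟩
  obtain ⟨c, hc⟩ : ∃ c : ℝ, c = (v - u) / 2 := ⟨_, rfl⟩
  have hcpos : 0 < c := by rw [hc]; linarith
  have hum : u < m := by rw [hm]; linarith
  have hmv : m < v := by rw [hm]; linarith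
  have hmu : m - u = c := by rw [hm, hc]; ring
  have hvm : v - m = c := by rw [hm, hc]; ring
  have hvc : v - u = 2 * c := by rw [hc]; ring
  have hcr : Continuous fun t:ℝ => t^s := Real.continuous_rpow_const hs0.le
  have hcr1 : Continuous fun t:ℝ => (1-t)^s := hcr.comp (continuous_const.sub continuous_id)
  have hd : ∀ x ∈ Set.Icc u v, HasDerivAt f (f' x) x := by
    intro x hx
    exact hderiv x (by rw [interior_Ici]; exact lt_of_lt_of_le hu hx.1)
  have hfc : ContinuousOn f (Set.Icc u v) := fun x hx =>
    ((hd x hx).continuousAt).continuousWithinAt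
  have hsub1 : Set.uIcc u m ⊆ Set.Icc u v := by
    rw [Set.uIcc_of_le hum.le]; exact Set.Icc_subset_Icc le_rfl hmv.le
  have hsub2 : Set.uIcc m v ⊆ Set.Icc u v := by
    rw [Set.uIcc_of_le hmv.le]; exact Set.Icc_subset_Icc hum.le le_rfl
  have hint1 : IntervalIntegrable f' volume u m :=
    hint.mono_set (by rw [Set.uIcc_of_le (hum.trans hmv).le]; exact hsub1)
  have hint2 : IntervalIntegrable f' volume m v :=
    hint.mono_set (by rw [Set.uIcc_of_le (hum.trans hmv).le]; exact hsub2)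
  have hfint1 : IntervalIntegrable f volume u m :=
    (hfc.mono hsub1).intervalIntegrable
  have hfint2 : IntervalIntegrable f volume m v :=
    (hfc.mono hsub2).intervalIntegrable
  have hlin : ∀ (w : ℝ) (x : ℝ), HasDerivAt (fun x => 2*x - w) 2 x := by
    intro w x
    simpa using ((hasDerivAt_id x).const_mul 2).sub_const w
  have p1 : ∫ x in u..m, (2*x - u) * f' x
      = (2*m - u) * f m - (2*u - u) * f u - ∫ x in u..m, 2 * f x :=
    integral_mul_deriv_eq_deriv_mul
      (fun x _ => hlin u x) (fun x hx => hd x (hsub1 hx))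
      (continuous_const.intervalIntegrable _ _) hint1
  have p2 : ∫ x in m..v, (2*x - v) * f' x
      = (2*v - v) * f v - (2*m - v) * f m - ∫ x in m..v, 2 * f x :=
    integral_mul_deriv_eq_deriv_mul
      (fun x _ => hlin v x) (fun x hx => hd x (hsub2 hx))
      (continuous_const.intervalIntegrable _ _) hint2
  have hsplit : (∫ x in u..m, f x) + ∫ x in m..v, f x = ∫ x in u..v, f x :=
    integral_add_adjacent_intervals hfint1 hfint2
  have hconst1 : ∫ x in u..m, 2 * f x = 2 * ∫ x in u..m, f x := integral_const_mul 2 f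
  have hconst2 : ∫ x in m..v, 2 * f x = 2 * ∫ x in m..v, f x := integral_const_mul 2 f
  have hvu : (v:ℝ) - u ≠ 0 := by linarith
  have hiden : (v * f v - u * f u) / (2 * (v - u)) + (1 / 2) * f ((u + v) / 2)
        - (1 / (v - u)) * ∫ μ in u..v, f μ
      = ((∫ x in u..m, (2*x - u) * f' x) + ∫ x in m..v, (2*x - v) * f' x)
          / (2 * (v - u)) := by
    rw [p1, p2, hconst1, hconst2, ← hsplit, ← hm, hm]
    field_simp
    ring
  rw [hiden]
  -- bound for I1
  have key1 : |∫ x in u..m, (2*x - u) * f' x| ≤ c * (M * ((u+v)/(s+1))) := by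
    have habs : |∫ x in u..m, (2*x - u) * f' x| ≤ ∫ x in u..m, |(2*x - u) * f' x| :=
      abs_integral_le_integral_abs hum.le
    have hintabs : IntervalIntegrable (fun x => |(2*x - u) * f' x|) volume u m :=
      (hint1.continuousOn_mul (((continuous_const.mul continuous_id).sub continuous_const).continuousOn)).abs
    set φ : ℝ → ℝ := fun t => M * ((u + t*(v-u)) * (t^s + (1-t)^s)) with hφ
    have hφc : Continuous φ :=
      continuous_const.mul
        ((continuous_const.add (continuous_id.mul continuous_const)).mul (hcr.add hcr1))
    have hφint : IntervalIntegrable (fun x => φ ((x - u)/c)) volume u m :=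
      (hφc.comp ((continuous_id.sub continuous_const).div_const c)).intervalIntegrable _ _
    have hpt : ∀ x ∈ Set.Icc u m, |(2*x - u) * f' x| ≤ φ ((x - u)/c) := by
      intro x hx
      obtain ⟨t, htdef⟩ : ∃ t : ℝ, t = (x - u)/c := ⟨_, rfl⟩
      have htc : t * c = x - u := by rw [htdef]; field_simp
      have ht0 : 0 ≤ t := by rw [htdef]; apply div_nonneg _ hcpos.le; linarith [hx.1]
      have ht1 : t ≤ 1 := by
        rw [htdef, div_le_one hcpos]; linarith [hx.2, hmu]
      have hxeq : x = t * m + (1 - t) * u := by linear_combination -htc - t * hmu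
      have h2x : 2*x - u = u + t*(v-u) := by linear_combination -2*htc - t*hvc
      have hmem_m : m ∈ Set.Icc u v := ⟨hum.le, hmv.le⟩
      have hmem_u : u ∈ Set.Icc u v := ⟨le_rfl, (hum.trans hmv).le⟩
      have hcv := hsconv m hmem_m u hmem_u t ⟨ht0, ht1⟩
      rw [← hxeq] at hcv
      have hb1 : |f' m| ≤ M := hbound m hmem_m
      have hb2 : |f' u| ≤ M := hbound u hmem_u
      have hts : (0:ℝ) ≤ t^s := Real.rpow_nonneg ht0 s
      have hts1 : (0:ℝ) ≤ (1-t)^s := Real.rpow_nonneg (by linarith) s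
      have hfx : |f' x| ≤ (t^s + (1-t)^s) * M := by
        calc |f' x| ≤ t^s * |f' m| + (1-t)^s * |f' u| := hcv
          _ ≤ t^s * M + (1-t)^s * M := by gcongr
          _ = (t^s + (1-t)^s) * M := by ring
      have h2xpos : 0 ≤ 2*x - u := by nlinarith [hx.1, hu]
      rw [abs_mul, abs_of_nonneg h2xpos, hφ, ← htdef]
      calc (2*x-u) * |f' x| ≤ (2*x-u) * ((t^s + (1-t)^s) * M) :=
            mul_le_mul_of_nonneg_left hfx h2xpos
        _ = M * ((2*x-u) * (t^s + (1-t)^s)) := by ring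
        _ = M * ((u + t*(v-u)) * (t^s + (1-t)^s)) := by rw [h2x]
    have hmono : ∫ x in u..m, |(2*x - u) * f' x| ≤ ∫ x in u..m, φ ((x - u)/c) :=
      integral_mono_on hum.le hintabs hφint hpt
    have hcov : ∫ x in u..m, φ ((x - u)/c) = c * ∫ t in (0:ℝ)..1, φ t := by
      have heq : ∀ x : ℝ, φ ((x - u)/c) = φ (c⁻¹ * x + (-(u/c))) := by
        intro x; congr 1; field_simp; ring
      simp_rw [heq]
      rw [integral_comp_mul_add φ (inv_ne_zero hcpos.ne') (-(u/c))]
      have e0 : c⁻¹ * u + -(u/c) = 0 := by field_simp; ring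
      have e1 : c⁻¹ * m + -(u/c) = 1 := by
        field_simp
        linarith [hmu]
      rw [e0, e1, inv_inv, smul_eq_mul]
    have hval : ∫ t in (0:ℝ)..1, φ t = M * ((u+v)/(s+1)) := by
      rw [hφ, intervalIntegral.integral_const_mul, key_int s u (v-u) hs0]
      ring_nf
    calc |∫ x in u..m, (2*x - u) * f' x| ≤ ∫ x in u..m, |(2*x - u) * f' x| := habs
      _ ≤ ∫ x in u..m, φ ((x - u)/c) := hmono
      _ = c * ∫ t in (0:ℝ)..1, φ t := hcov
      _ = c * (M * ((u+v)/(s+1))) := by rw [hval]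
  -- bound for I2
  have key2 : |∫ x in m..v, (2*x - v) * f' x| ≤ c * (M * ((u+v)/(s+1))) := by
    have habs : |∫ x in m..v, (2*x - v) * f' x| ≤ ∫ x in m..v, |(2*x - v) * f' x| :=
      abs_integral_le_integral_abs hmv.le
    have hintabs : IntervalIntegrable (fun x => |(2*x - v) * f' x|) volume m v :=
      (hint2.continuousOn_mul (((continuous_const.mul continuous_id).sub continuous_const).continuousOn)).abs
    set φ : ℝ → ℝ := fun t => M * ((v + t*(u-v)) * (t^s + (1-t)^s)) with hφ
    have hφc : Continuous φ :=
      continuous_const.mul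
        ((continuous_const.add (continuous_id.mul continuous_const)).mul (hcr.add hcr1))
    have hφint : IntervalIntegrable (fun x => φ ((v - x)/c)) volume m v :=
      (hφc.comp ((continuous_const.sub continuous_id).div_const c)).intervalIntegrable _ _
    have hpt : ∀ x ∈ Set.Icc m v, |(2*x - v) * f' x| ≤ φ ((v - x)/c) := by
      intro x hx
      obtain ⟨t, htdef⟩ : ∃ t : ℝ, t = (v - x)/c := ⟨_, rfl⟩
      have htc : t * c = v - x := by rw [htdef]; field_simp
      have ht0 : 0 ≤ t := by rw [htdef]; apply div_nonneg _ hcpos.le; linarith [hx.2]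
      have ht1 : t ≤ 1 := by
        rw [htdef, div_le_one hcpos]; linarith [hx.1, hvm]
      have hxeq : x = t * m + (1 - t) * v := by linear_combination htc + t * hvm
      have h2x : 2*x - v = v + t*(u-v) := by linear_combination 2*htc + t*hvc
      have hmem_m : m ∈ Set.Icc u v := ⟨hum.le, hmv.le⟩
      have hmem_v : v ∈ Set.Icc u v := ⟨(hum.trans hmv).le, le_rfl⟩
      have hcv := hsconv m hmem_m v hmem_v t ⟨ht0, ht1⟩
      rw [← hxeq] at hcv
      have hb1 : |f' m| ≤ M := hbound m hmem_m
      have hb2 : |f' v| ≤ M := hbound v hmem_v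
      have hts : (0:ℝ) ≤ t^s := Real.rpow_nonneg ht0 s
      have hts1 : (0:ℝ) ≤ (1-t)^s := Real.rpow_nonneg (by linarith) s
      have hfx : |f' x| ≤ (t^s + (1-t)^s) * M := by
        calc |f' x| ≤ t^s * |f' m| + (1-t)^s * |f' v| := hcv
          _ ≤ t^s * M + (1-t)^s * M := by gcongr
          _ = (t^s + (1-t)^s) * M := by ring
      have h2xpos : 0 ≤ 2*x - v := by nlinarith [hx.1, hum, hu]
      rw [abs_mul, abs_of_nonneg h2xpos, hφ, ← htdef]
      calc (2*x-v) * |f' x| ≤ (2*x-v) * ((t^s + (1-t)^s) * M) :=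
            mul_le_mul_of_nonneg_left hfx h2xpos
        _ = M * ((2*x-v) * (t^s + (1-t)^s)) := by ring
        _ = M * ((v + t*(u-v)) * (t^s + (1-t)^s)) := by rw [h2x]
    have hmono : ∫ x in m..v, |(2*x - v) * f' x| ≤ ∫ x in m..v, φ ((v - x)/c) :=
      integral_mono_on hmv.le hintabs hφint hpt
    have hcov : ∫ x in m..v, φ ((v - x)/c) = c * ∫ t in (0:ℝ)..1, φ t := by
      have heq : ∀ x : ℝ, φ ((v - x)/c) = φ ((-c⁻¹) * x + (v/c)) := by
        intro x; congr 1; field_simp; ring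
      simp_rw [heq]
      rw [integral_comp_mul_add φ (by simp [hcpos.ne'] : (-c⁻¹ : ℝ) ≠ 0) (v/c)]
      have e0 : -c⁻¹ * m + v/c = 1 := by
        have e0' : -c⁻¹ * m + v/c = (v - m)/c := by ring
        rw [e0', hvm, div_self hcpos.ne']
      have e1 : -c⁻¹ * v + v/c = 0 := by field_simp; ring
      rw [e0, e1, smul_eq_mul, integral_symm]
      field_simp
    have hval : ∫ t in (0:ℝ)..1, φ t = M * ((u+v)/(s+1)) := by
      rw [hφ, intervalIntegral.integral_const_mul, key_int s v (u-v) hs0]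
      ring_nf
    calc |∫ x in m..v, (2*x - v) * f' x| ≤ ∫ x in m..v, |(2*x - v) * f' x| := habs
      _ ≤ ∫ x in m..v, φ ((v - x)/c) := hmono
      _ = c * ∫ t in (0:ℝ)..1, φ t := hcov
      _ = c * (M * ((u+v)/(s+1))) := by rw [hval]
  -- combine
  have hden : (0:ℝ) < 2 * (v - u) := by linarith
  have hs1' : (0:ℝ) < 2 * (s + 1) := by linarith
  rw [abs_div, abs_of_pos hden, div_le_div_iff₀ hden hs1']
  have htri := abs_add_le (∫ x in u..m, (2*x - u) * f' x) (∫ x in m..v, (2*x - v) * f' x)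
  have hsum2 : c * (M * ((u+v)/(s+1))) + c * (M * ((u+v)/(s+1)))
      = (v-u) * (M * ((u+v)/(s+1))) := by rw [hvc]; ring
  have h5 : |(∫ x in u..m, (2*x - u) * f' x) + ∫ x in m..v, (2*x - v) * f' x|
      ≤ (v-u) * (M * ((u+v)/(s+1))) := by linarith
  calc |(∫ x in u..m, (2*x - u) * f' x) + ∫ x in m..v, (2*x - v) * f' x| * (2*(s+1))
      ≤ ((v-u) * (M * ((u+v)/(s+1)))) * (2*(s+1)) :=
        mul_le_mul_of_nonneg_right h5 hs1'.le
    _ = M * (u + v) * (2 * (v - u)) := by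
        have : s + 1 ≠ 0 := by linarith
        field_simp
end

section
/- Let J = [0,∞) and let f : J → ℝ be differentiable on the interior of J with f' integrable on [u,v], where u, v ∈ J and 0 < u < v. Let q > 1 and p satisfy 1/p + 1/q = 1. If |f'|^q is convex on [u,v], then for every x ∈ [u,v]: |((v-x)(v·f(v) - u·f(x)) + (x-u)(v·f(x) - u·f(u)))/(v-u)² - (1/(v-u))·∫_u^v f(μ) dμ| ≤ ((v-x)²/(v-u)²)·L_p(u,v)·((|f'(x)|^q + |f'(v)|^q)/2)^{1/q} + ((x-u)²/(v-u)²)·L_p(u,v)·((|f'(x)|^q + |f'(u)|^q)/2)^{1/q}. -/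
open MeasureTheory Set intervalIntegral

/-- Hölder + convexity bound for one side. Here the kernel is the affine function
taking value `(b-a)*u/(v-u)^2` at `a` and `(b-a)*v/(v-u)^2` at `b`. -/
lemma side_bound_stmt6 (f' : ℝ → ℝ) (u v p q a b : ℝ) (hu : 0 < u) (huv : u < v)
    (hp : 1 < p) (hq : 1 < q) (hpq : 1 / p + 1 / q = 1)
    (ha : u ≤ a) (hb : b ≤ v) (hab : a < b)
    (hm : AEStronglyMeasurable f' (volume.restrict (Set.Ioc a b)))
    (hconv : ∀ t ∈ Set.Icc (0:ℝ) 1,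
      |f' (t * b + (1 - t) * a)| ^ q ≤ t * |f' b| ^ q + (1 - t) * |f' a| ^ q) :
    ∫ μ in a..b, ((b - a) * u + (μ - a) * (v - u)) / (v - u) ^ 2 * |f' μ|
      ≤ (b - a) ^ 2 / (v - u) ^ 2 *
        ((v ^ (p + 1) - u ^ (p + 1)) / ((p + 1) * (v - u))) ^ (1 / p) *
        ((|f' b| ^ q + |f' a| ^ q) / 2) ^ (1 / q) := by
  have hvu : (0:ℝ) < v - u := sub_pos.2 huv
  have hba : (0:ℝ) < b - a := sub_pos.2 hab
  have hp0 : (0:ℝ) < p := lt_trans one_pos hp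
  have hq0 : (0:ℝ) < q := lt_trans one_pos hq
  have hp1 : (0:ℝ) < p + 1 := by linarith
  have hpq' : Real.HolderConjugate p q := ⟨by rw [inv_one, ← one_div, ← one_div]; exact hpq, hp0, hq0⟩
  set A := |f' a| ^ q with hA
  set B := |f' b| ^ q with hB
  have hA0 : 0 ≤ A := Real.rpow_nonneg (abs_nonneg _) _
  have hB0 : 0 ≤ B := Real.rpow_nonneg (abs_nonneg _) _
  set M := max A B with hM
  have hM0 : 0 ≤ M := le_trans hA0 (le_max_left _ _)
  -- pointwise convexity bound
  have key : ∀ μ ∈ Set.Icc a b, |f' μ| ^ q ≤ ((μ - a) * B + (b - μ) * A) / (b - a) := by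
    intro μ hμ
    have ht : (μ - a) / (b - a) ∈ Set.Icc (0:ℝ) 1 :=
      ⟨div_nonneg (by linarith [hμ.1]) hba.le, (div_le_one hba).2 (by linarith [hμ.2])⟩
    have h := hconv _ ht
    have hrw : (μ - a) / (b - a) * b + (1 - (μ - a) / (b - a)) * a = μ := by
      field_simp
      ring
    rw [hrw] at h
    calc |f' μ| ^ q ≤ (μ - a) / (b - a) * B + (1 - (μ - a) / (b - a)) * A := h
      _ = ((μ - a) * B + (b - μ) * A) / (b - a) := by field_simp; ring
  have keyM : ∀ μ ∈ Set.Icc a b, |f' μ| ^ q ≤ M := by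
    intro μ hμ
    refine (key μ hμ).trans ?_
    rw [div_le_iff₀ hba]
    nlinarith [le_max_left A B, le_max_right A B, hμ.1, hμ.2]
  have habs : ∀ μ ∈ Set.Icc a b, |f' μ| ≤ M ^ (1 / q) := by
    intro μ hμ
    have h1 : |f' μ| = (|f' μ| ^ q) ^ (1 / q) := by
      rw [← Real.rpow_mul (abs_nonneg _), mul_one_div_cancel hq0.ne', Real.rpow_one]
    rw [h1]
    exact Real.rpow_le_rpow (Real.rpow_nonneg (abs_nonneg _) _) (keyM μ hμ) (by positivity)
  haveI : IsFiniteMeasure (volume.restrict (Set.Ioc a b)) :=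
    ⟨by rw [Measure.restrict_apply_univ]; exact measure_Ioc_lt_top⟩
  -- measurability of |f'|
  have hmabs : AEStronglyMeasurable (fun μ => |f' μ|) (volume.restrict (Set.Ioc a b)) := by
    simpa [Real.norm_eq_abs] using hm.norm
  have hfmem : MemLp (fun μ => |f' μ|) (ENNReal.ofReal q) (volume.restrict (Set.Ioc a b)) := by
    refine MemLp.of_bound hmabs (M ^ (1 / q)) ?_
    refine (ae_restrict_iff' measurableSet_Ioc).2 (Filter.Eventually.of_forall fun μ hμ => ?_)
    rw [Real.norm_eq_abs, abs_abs]
    exact habs μ (Set.Ioc_subset_Icc_self hμ)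
  -- the kernel
  set φ : ℝ → ℝ := fun μ => ((b - a) * u + (μ - a) * (v - u)) / (v - u) ^ 2 with hφ
  have hφcont : Continuous φ := by
    apply Continuous.div_const
    exact continuous_const.add ((continuous_id.sub continuous_const).mul continuous_const)
  have hφ0 : ∀ μ ∈ Set.Icc a b, 0 ≤ φ μ := by
    intro μ hμ
    apply div_nonneg _ (by positivity)
    nlinarith [hμ.1, hμ.2]
  have hφbd : ∀ μ ∈ Set.Icc a b, φ μ ≤ ((b - a) * u + (b - a) * (v - u)) / (v - u) ^ 2 := by
    intro μ hμ
    apply (div_le_div_iff_of_pos_right (by positivity : (0:ℝ) < (v - u) ^ 2)).mpr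
    nlinarith [hμ.2]
  have hφmem : MemLp φ (ENNReal.ofReal p) (volume.restrict (Set.Ioc a b)) := by
    refine MemLp.of_bound hφcont.aestronglyMeasurable
      (((b - a) * u + (b - a) * (v - u)) / (v - u) ^ 2) ?_
    refine (ae_restrict_iff' measurableSet_Ioc).2 (Filter.Eventually.of_forall fun μ hμ => ?_)
    have hμ' := Set.Ioc_subset_Icc_self hμ
    rw [Real.norm_eq_abs, abs_of_nonneg (hφ0 μ hμ')]
    exact hφbd μ hμ'
  -- Hölder's inequality
  have holder := MeasureTheory.integral_mul_le_Lp_mul_Lq_of_nonneg hpq'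
    ((ae_restrict_iff' measurableSet_Ioc).2
      (Filter.Eventually.of_forall fun μ hμ => hφ0 μ (Set.Ioc_subset_Icc_self hμ)))
    (Filter.Eventually.of_forall fun μ => abs_nonneg _) hφmem hfmem
  -- compute the p-integral
  set lam : ℝ := (b - a) / (v - u) ^ 2 with hlam
  have hlam0 : 0 < lam := by positivity
  set C : ℝ := (v ^ (p + 1) - u ^ (p + 1)) / ((p + 1) * (v - u)) with hC
  have hC0 : 0 ≤ C := by
    have : u ^ (p + 1) ≤ v ^ (p + 1) := Real.rpow_le_rpow hu.le huv.le hp1.le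
    apply div_nonneg (by linarith) (by positivity)
  have hIp : ∫ μ in a..b, φ μ ^ p = lam ^ (p + 1) * ((v - u) ^ 2 * C) := by
    have hc : (1 : ℝ) / (v - u) ≠ 0 := one_div_ne_zero hvu.ne'
    have hrw : ∀ μ : ℝ, φ μ ^ p
        = (fun s : ℝ => s ^ p) (1 / (v - u) * μ + ((b - a) * u - a * (v - u)) / (v - u) ^ 2) := by
      intro μ
      have : φ μ = 1 / (v - u) * μ + ((b - a) * u - a * (v - u)) / (v - u) ^ 2 := by
        rw [hφ]; field_simp; ring
      rw [this]
    have e1 : 1 / (v - u) * a + ((b - a) * u - a * (v - u)) / (v - u) ^ 2 = lam * u := by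
      rw [hlam]; field_simp; ring
    have e2 : 1 / (v - u) * b + ((b - a) * u - a * (v - u)) / (v - u) ^ 2 = lam * v := by
      rw [hlam]; field_simp; ring
    calc ∫ μ in a..b, φ μ ^ p
        = ∫ μ in a..b, (fun s : ℝ => s ^ p)
            (1 / (v - u) * μ + ((b - a) * u - a * (v - u)) / (v - u) ^ 2) := by
          exact intervalIntegral.integral_congr fun μ _ => hrw μ
      _ = (1 / (v - u))⁻¹ • ∫ s in lam * u..lam * v, s ^ p := by
          rw [intervalIntegral.integral_comp_mul_add (fun s : ℝ => s ^ p) hc, e1, e2]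
      _ = (v - u) * (((lam * v) ^ (p + 1) - (lam * u) ^ (p + 1)) / (p + 1)) := by
          rw [integral_rpow (Or.inl (by linarith : (-1:ℝ) < p))]
          rw [one_div, inv_inv, smul_eq_mul]
      _ = (v - u) * ((lam ^ (p + 1) * v ^ (p + 1) - lam ^ (p + 1) * u ^ (p + 1)) / (p + 1)) := by
          rw [Real.mul_rpow hlam0.le (by linarith : (0:ℝ) ≤ v),
            Real.mul_rpow hlam0.le hu.le]
      _ = lam ^ (p + 1) * ((v - u) ^ 2 * C) := by
          rw [hC]; field_simp
  -- bound the q-integral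
  have hmIcc : AEStronglyMeasurable f' (volume.restrict (Set.Icc a b)) := by
    rwa [← Measure.restrict_congr_set Ioc_ae_eq_Icc]
  haveI : IsFiniteMeasure (volume.restrict (Set.Icc a b)) :=
    ⟨by rw [Measure.restrict_apply_univ]; exact measure_Icc_lt_top⟩
  have hqint : IntervalIntegrable (fun μ => |f' μ| ^ q) volume a b := by
    apply MeasureTheory.IntegrableOn.intervalIntegrable
    rw [Set.uIcc_of_le hab.le]
    have hmeas : AEStronglyMeasurable (fun μ => |f' μ| ^ q) (volume.restrict (Set.Icc a b)) := by
      have hg : Continuous (fun y : ℝ => |y| ^ q) :=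
        (Real.continuous_rpow_const hq0.le).comp continuous_abs
      exact hg.comp_aestronglyMeasurable hmIcc
    apply MeasureTheory.memLp_one_iff_integrable.mp
    refine MemLp.of_bound hmeas M ?_
    refine (ae_restrict_iff' measurableSet_Icc).2 (Filter.Eventually.of_forall fun μ hμ => ?_)
    rw [Real.norm_eq_abs, abs_of_nonneg (Real.rpow_nonneg (abs_nonneg _) _)]
    exact keyM μ hμ
  have hIq : ∫ μ in a..b, |f' μ| ^ q ≤ (b - a) * ((B + A) / 2) := by
    have hgint : IntervalIntegrable (fun μ => ((μ - a) * B + (b - μ) * A) / (b - a))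
        volume a b := by
      apply Continuous.intervalIntegrable
      apply Continuous.div_const
      exact (((continuous_id.sub continuous_const).mul continuous_const).add
        ((continuous_const.sub continuous_id).mul continuous_const))
    have hmono := intervalIntegral.integral_mono_on hab.le hqint hgint key
    refine hmono.trans (le_of_eq ?_)
    have h1 : (fun μ : ℝ => ((μ - a) * B + (b - μ) * A) / (b - a))
        = fun μ : ℝ => ((B - A) / (b - a)) * μ + ((b * A - a * B) / (b - a)) := by
      funext μ; field_simp; ring
    have hi1 : IntervalIntegrable (fun μ : ℝ => (B - A) / (b - a) * μ) volume a b :=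
      (continuous_const.mul continuous_id').intervalIntegrable _ _
    rw [h1, intervalIntegral.integral_add hi1 (intervalIntegrable_const),
      intervalIntegral.integral_const_mul, integral_id, intervalIntegral.integral_const,
      smul_eq_mul]
    field_simp
    ring
  have hIq0 : 0 ≤ ∫ μ in a..b, |f' μ| ^ q :=
    intervalIntegral.integral_nonneg hab.le fun μ _ => Real.rpow_nonneg (abs_nonneg _) _
  have hIp0 : 0 ≤ ∫ μ in a..b, φ μ ^ p :=
    intervalIntegral.integral_nonneg hab.le fun μ hμ => Real.rpow_nonneg (hφ0 μ hμ) _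
  -- assemble
  have hD0 : 0 ≤ (B + A) / 2 := by positivity
  calc ∫ μ in a..b, φ μ * |f' μ|
      = ∫ μ in Set.Ioc a b, φ μ * |f' μ| := intervalIntegral.integral_of_le hab.le
    _ ≤ (∫ μ in Set.Ioc a b, φ μ ^ p) ^ (1 / p) * (∫ μ in Set.Ioc a b, |f' μ| ^ q) ^ (1 / q) :=
        holder
    _ = (∫ μ in a..b, φ μ ^ p) ^ (1 / p) * (∫ μ in a..b, |f' μ| ^ q) ^ (1 / q) := by
        rw [intervalIntegral.integral_of_le hab.le, intervalIntegral.integral_of_le hab.le]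
    _ ≤ (∫ μ in a..b, φ μ ^ p) ^ (1 / p) * ((b - a) * ((B + A) / 2)) ^ (1 / q) := by
        apply mul_le_mul_of_nonneg_left _ (Real.rpow_nonneg hIp0 _)
        exact Real.rpow_le_rpow hIq0 hIq (by positivity)
    _ = (b - a) ^ 2 / (v - u) ^ 2 * C ^ (1 / p) * ((B + A) / 2) ^ (1 / q) := by
        rw [hIp,
          Real.mul_rpow (by positivity) (mul_nonneg (by positivity) hC0),
          Real.mul_rpow (by positivity : (0:ℝ) ≤ (v - u) ^ 2) hC0,
          Real.mul_rpow hba.le hD0]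
        have hpne : p ≠ 0 := hp0.ne'
        have e1 : (lam ^ (p + 1)) ^ (1 / p) = lam * lam ^ (1 / p) := by
          rw [← Real.rpow_mul hlam0.le]
          have h2 : (p + 1) * (1 / p) = 1 + 1 / p := by field_simp
          rw [h2, Real.rpow_add hlam0, Real.rpow_one]
        have e2 : lam ^ (1 / p) * ((v - u) ^ 2 : ℝ) ^ (1 / p) = (b - a) ^ (1 / p) := by
          rw [← Real.mul_rpow hlam0.le (by positivity)]
          congr 1
          rw [hlam]; field_simp
        have e3 : (b - a) ^ (1 / p) * (b - a) ^ (1 / q) = b - a := by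
          rw [← Real.rpow_add hba, hpq, Real.rpow_one]
        have hlam2 : lam * (b - a) = (b - a) ^ 2 / (v - u) ^ 2 := by
          rw [hlam]; field_simp
        rw [e1]
        linear_combination (lam * C ^ (1 / p) * ((B + A) / 2) ^ (1 / q) * (b - a) ^ (1 / q)) * e2
          + (lam * C ^ (1 / p) * ((B + A) / 2) ^ (1 / q)) * e3
          + (C ^ (1 / p) * ((B + A) / 2) ^ (1 / q)) * hlam2

theorem stmt_6 (f f' : ℝ → ℝ) (u v p q : ℝ) (hu : 0 < u) (huv : u < v)
    (hq : 1 < q) (hpq : 1 / p + 1 / q = 1)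
    (hderiv : ∀ y ∈ interior (Set.Ici (0:ℝ)), HasDerivAt f (f' y) y)
    (hint : IntervalIntegrable f' MeasureTheory.volume u v)
    (hconv : ∀ a ∈ Set.Icc u v, ∀ b ∈ Set.Icc u v, ∀ t ∈ Set.Icc (0:ℝ) 1,
      |f' (t * a + (1 - t) * b)| ^ q ≤ t * |f' a| ^ q + (1 - t) * |f' b| ^ q)
    (x : ℝ) (hx : x ∈ Set.Icc u v) :
    |((v - x) * (v * f v - u * f x) + (x - u) * (v * f x - u * f u)) / (v - u) ^ 2
        - (1 / (v - u)) * ∫ μ in u..v, f μ|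
      ≤ ((v - x) ^ 2 / (v - u) ^ 2) *
          ((v ^ (p + 1) - u ^ (p + 1)) / ((p + 1) * (v - u))) ^ (1 / p) *
          ((|f' x| ^ q + |f' v| ^ q) / 2) ^ (1 / q)
        + ((x - u) ^ 2 / (v - u) ^ 2) *
          ((v ^ (p + 1) - u ^ (p + 1)) / ((p + 1) * (v - u))) ^ (1 / p) *
          ((|f' x| ^ q + |f' u| ^ q) / 2) ^ (1 / q) := by
  have hvu : (0:ℝ) < v - u := sub_pos.2 huv
  have hq0 : (0:ℝ) < q := lt_trans one_pos hq
  have hp : 1 < p := by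
    have h1 : 1 / q < 1 := by rw [div_lt_one hq0]; exact hq
    have h2 : 0 < 1 / q := by positivity
    have h3 : 0 < 1 / p := by linarith
    have hp0 : 0 < p := by
      rcases lt_trichotomy p 0 with h | h | h
      · have : 1 / p < 0 := div_neg_of_pos_of_neg one_pos h
        linarith
      · rw [h] at h3; simp at h3
      · exact h
    rw [← div_lt_one hp0]
    linarith
  have hderiv' : ∀ y ∈ Set.Ioi (0:ℝ), HasDerivAt f (f' y) y := by
    simpa [interior_Ici] using hderiv
  have hfint : ∀ a b : ℝ, u ≤ a → a ≤ b → b ≤ v → IntervalIntegrable f volume a b := by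
    intro a b hua hab hbv
    apply ContinuousOn.intervalIntegrable
    intro y hy
    rw [Set.uIcc_of_le hab] at hy
    exact ((hderiv' y (lt_of_lt_of_le hu (le_trans hua hy.1))).continuousAt).continuousWithinAt
  have hparts : ∀ a b : ℝ, u ≤ a → a ≤ b → b ≤ v →
      ∫ μ in a..b, ((b - a) * u + (μ - a) * (v - u)) / (v - u) ^ 2 * f' μ
        = ((b - a) * u + (b - a) * (v - u)) / (v - u) ^ 2 * f b
          - ((b - a) * u + (a - a) * (v - u)) / (v - u) ^ 2 * f a
          - ∫ μ in a..b, (v - u) / (v - u) ^ 2 * f μ := by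
    intro a b hua hab hbv
    have hK : ∀ μ ∈ Set.uIcc a b,
        HasDerivAt (fun μ => ((b - a) * u + (μ - a) * (v - u)) / (v - u) ^ 2)
          ((v - u) / (v - u) ^ 2) μ := by
      intro μ _
      have h1 : HasDerivAt (fun μ : ℝ => (b - a) * u + (μ - a) * (v - u)) (v - u) μ := by
        simpa using (((hasDerivAt_id μ).sub_const a).mul_const (v - u)).const_add ((b - a) * u)
      exact h1.div_const _
    have hf : ∀ μ ∈ Set.uIcc a b, HasDerivAt f (f' μ) μ := by
      intro μ hμ
      rw [Set.uIcc_of_le hab] at hμ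
      exact hderiv' μ (lt_of_lt_of_le hu (le_trans hua hμ.1))
    have hsub : Set.uIcc a b ⊆ Set.uIcc u v := by
      rw [Set.uIcc_of_le hab, Set.uIcc_of_le (le_of_lt huv)]
      exact Set.Icc_subset_Icc hua hbv
    exact intervalIntegral.integral_mul_deriv_eq_deriv_mul hK hf
      (intervalIntegrable_const) (hint.mono_set hsub)
  have hf1 : IntervalIntegrable f volume u x := hfint u x le_rfl hx.1 hx.2
  have hf2 : IntervalIntegrable f volume x v := hfint x v hx.1 hx.2 le_rfl
  have hsplit : (∫ μ in u..x, (v - u) / (v - u) ^ 2 * f μ)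
      + ∫ μ in x..v, (v - u) / (v - u) ^ 2 * f μ = (1 / (v - u)) * ∫ μ in u..v, f μ := by
    rw [intervalIntegral.integral_const_mul, intervalIntegral.integral_const_mul, ← mul_add,
      intervalIntegral.integral_add_adjacent_intervals hf1 hf2]
    congr 1
    rw [sq]
    field_simp
  have hid : ((v - x) * (v * f v - u * f x) + (x - u) * (v * f x - u * f u)) / (v - u) ^ 2
        - (1 / (v - u)) * ∫ μ in u..v, f μ
      = (∫ μ in u..x, ((x - u) * u + (μ - u) * (v - u)) / (v - u) ^ 2 * f' μ)
        + ∫ μ in x..v, ((v - x) * u + (μ - x) * (v - u)) / (v - u) ^ 2 * f' μ := by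
    rw [hparts u x le_rfl hx.1 hx.2, hparts x v hx.1 hx.2 le_rfl, ← hsplit]
    have halg : ((v - x) * (v * f v - u * f x) + (x - u) * (v * f x - u * f u)) / (v - u) ^ 2
        = ((x - u) * u + (x - u) * (v - u)) / (v - u) ^ 2 * f x
          - ((x - u) * u + (u - u) * (v - u)) / (v - u) ^ 2 * f u
          + (((v - x) * u + (v - x) * (v - u)) / (v - u) ^ 2 * f v
          - ((v - x) * u + (x - x) * (v - u)) / (v - u) ^ 2 * f x) := by
      field_simp
      ring
    rw [halg]
    ring
  rw [hid]
  have hm1 : AEStronglyMeasurable f' (volume.restrict (Set.Ioc u x)) :=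
    hint.1.aestronglyMeasurable.mono_measure
      (Measure.restrict_mono (Set.Ioc_subset_Ioc le_rfl hx.2) le_rfl)
  have hm2 : AEStronglyMeasurable f' (volume.restrict (Set.Ioc x v)) :=
    hint.1.aestronglyMeasurable.mono_measure
      (Measure.restrict_mono (Set.Ioc_subset_Ioc hx.1 le_rfl) le_rfl)
  have h1 : |∫ μ in u..x, ((x - u) * u + (μ - u) * (v - u)) / (v - u) ^ 2 * f' μ|
      ≤ (x - u) ^ 2 / (v - u) ^ 2 *
          ((v ^ (p + 1) - u ^ (p + 1)) / ((p + 1) * (v - u))) ^ (1 / p) *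
          ((|f' x| ^ q + |f' u| ^ q) / 2) ^ (1 / q) := by
    rcases eq_or_lt_of_le hx.1 with h | h
    · rw [← h]
      simp
    · have hKnn : ∀ μ ∈ Set.uIcc u x, 0 ≤ ((x - u) * u + (μ - u) * (v - u)) / (v - u) ^ 2 := by
        intro μ hμ
        rw [Set.uIcc_of_le h.le] at hμ
        apply div_nonneg _ (by positivity)
        have e1 := mul_nonneg (sub_nonneg.2 h.le) hu.le
        have e2 := mul_nonneg (sub_nonneg.2 hμ.1) hvu.le
        linarith
      calc |∫ μ in u..x, ((x - u) * u + (μ - u) * (v - u)) / (v - u) ^ 2 * f' μ|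
          ≤ ∫ μ in u..x, |((x - u) * u + (μ - u) * (v - u)) / (v - u) ^ 2 * f' μ| :=
            intervalIntegral.abs_integral_le_integral_abs h.le
        _ = ∫ μ in u..x, ((x - u) * u + (μ - u) * (v - u)) / (v - u) ^ 2 * |f' μ| := by
            apply intervalIntegral.integral_congr
            intro μ hμ
            simp only [abs_mul, abs_of_nonneg (hKnn μ hμ)]
        _ ≤ _ := side_bound_stmt6 f' u v p q u x hu huv hp hq hpq le_rfl hx.2 h hm1
            (fun t ht => hconv x hx u ⟨le_rfl, huv.le⟩ t ht)
  have h2 : |∫ μ in x..v, ((v - x) * u + (μ - x) * (v - u)) / (v - u) ^ 2 * f' μ|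
      ≤ (v - x) ^ 2 / (v - u) ^ 2 *
          ((v ^ (p + 1) - u ^ (p + 1)) / ((p + 1) * (v - u))) ^ (1 / p) *
          ((|f' x| ^ q + |f' v| ^ q) / 2) ^ (1 / q) := by
    rw [add_comm (|f' x| ^ q) (|f' v| ^ q)]
    rcases eq_or_lt_of_le hx.2 with h | h
    · rw [h]
      simp
    · have hKnn : ∀ μ ∈ Set.uIcc x v, 0 ≤ ((v - x) * u + (μ - x) * (v - u)) / (v - u) ^ 2 := by
        intro μ hμ
        rw [Set.uIcc_of_le h.le] at hμ
        apply div_nonneg _ (by positivity)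
        have e1 := mul_nonneg (sub_nonneg.2 h.le) hu.le
        have e2 := mul_nonneg (sub_nonneg.2 hμ.1) hvu.le
        linarith
      calc |∫ μ in x..v, ((v - x) * u + (μ - x) * (v - u)) / (v - u) ^ 2 * f' μ|
          ≤ ∫ μ in x..v, |((v - x) * u + (μ - x) * (v - u)) / (v - u) ^ 2 * f' μ| :=
            intervalIntegral.abs_integral_le_integral_abs h.le
        _ = ∫ μ in x..v, ((v - x) * u + (μ - x) * (v - u)) / (v - u) ^ 2 * |f' μ| := by
            apply intervalIntegral.integral_congr
            intro μ hμ
            simp only [abs_mul, abs_of_nonneg (hKnn μ hμ)]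
        _ ≤ _ := side_bound_stmt6 f' u v p q x v hu huv hp hq hpq hx.1 le_rfl h hm2
            (fun t ht => hconv v ⟨huv.le, le_rfl⟩ x hx t ht)
  exact le_trans (abs_add_le _ _) (le_trans (add_le_add h1 h2) (le_of_eq (add_comm _ _)))
end

section
/- Let J = [0,∞) and let f : J → ℝ be differentiable on the interior of J with f' integrable on [u,v], where u, v ∈ J and 0 < u < v. Let q > 1 and p satisfy 1/p + 1/q = 1, and let s ∈ (0,1]. If |f'|^q is s-convex in the second sense on [u,v], then for every x ∈ [u,v]: |((v-x)(v·f(v) - u·f(x)) + (x-u)(v·f(x) - u·f(u)))/(v-u)² - (1/(v-u))·∫_u^v f(μ) dμ| ≤ ((v-x)²/(v-u)²)·L_p(u,v)·((|f'(x)|^q + |f'(v)|^q)/(s+1))^{1/q} + ((x-u)²/(v-u)²)·L_p(u,v)·((|f'(x)|^q + |f'(u)|^q)/(s+1))^{1/q}. -/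
open MeasureTheory Set


lemma aux7 (f' : ℝ → ℝ) (u v p q s a b : ℝ) (hu : 0 < u) (huv : u < v)
    (hp : 1 < p) (hq : 1 < q) (hpq : 1 / p + 1 / q = 1) (hs0 : 0 < s) (hs1 : s ≤ 1)
    (hua : u ≤ a) (hab : a ≤ b) (hbv : b ≤ v)
    (hmeas : AEStronglyMeasurable f' (volume.restrict (Set.Ioc a b)))
    (hsc : ∀ t ∈ Set.Icc (0:ℝ) 1,
      |f' (t * a + (1 - t) * b)| ^ q ≤ t ^ s * |f' a| ^ q + (1 - t) ^ s * |f' b| ^ q) :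
    |∫ σ in a..b, ((v - u) * σ - (v * a - u * b)) * f' σ|
      ≤ (b - a) ^ 2 * ((v ^ (p + 1) - u ^ (p + 1)) / ((p + 1) * (v - u))) ^ (1 / p)
        * ((|f' a| ^ q + |f' b| ^ q) / (s + 1)) ^ (1 / q) := by
  rcases hab.eq_or_lt with rfl | hab'
  · simp
  have hvu : (0:ℝ) < v - u := by linarith
  have hba : (0:ℝ) < b - a := by linarith
  have hq0 : (0:ℝ) < q := by linarith
  have hp0 : (0:ℝ) < p := by linarith
  have hpq' : Real.HolderConjugate p q :=
    ⟨by rw [inv_one, ← one_div, ← one_div]; exact hpq, hp0, hq0⟩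
  set A := |f' a| ^ q with hA
  set B := |f' b| ^ q with hB
  have hA0 : 0 ≤ A := Real.rpow_nonneg (abs_nonneg _) _
  have hB0 : 0 ≤ B := Real.rpow_nonneg (abs_nonneg _) _
  set C := (v ^ (p + 1) - u ^ (p + 1)) / ((p + 1) * (v - u)) with hCdef
  have hC0 : 0 ≤ C := by
    have h1 : u ^ (p+1) ≤ v ^ (p+1) :=
      Real.rpow_le_rpow hu.le (by linarith) (by linarith)
    exact div_nonneg (by linarith) (by positivity)
  set L : ℝ → ℝ := fun σ => (v - u) * σ - (v * a - u * b) with hLdef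
  -- pointwise convexity bound
  have hptw0 : ∀ σ ∈ Set.Ioc a b,
      |f' σ| ^ q ≤ ((b - σ)/(b - a)) ^ s * A + ((σ - a)/(b - a)) ^ s * B := by
    intro σ hσ
    obtain ⟨h1, h2⟩ := hσ
    have ht : (b - σ) / (b - a) ∈ Set.Icc (0:ℝ) 1 :=
      ⟨div_nonneg (by linarith) hba.le, by rw [div_le_one hba]; linarith⟩
    have hb1 : (1:ℝ) - (b - σ)/(b - a) = (σ - a)/(b - a) := by field_simp; ring
    have hσeq : (b - σ)/(b - a) * a + (1 - (b - σ)/(b - a)) * b = σ := by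
      field_simp; ring
    have h := hsc _ ht
    rw [hσeq, hb1] at h
    exact h
  have hptw : ∀ σ ∈ Set.Ioc a b,
      |f' σ| ^ q ≤ ((b - σ) ^ s * A + (σ - a) ^ s * B) / (b - a) ^ s := by
    intro σ hσ
    refine (hptw0 σ hσ).trans_eq ?_
    rw [Real.div_rpow (by linarith [hσ.2] : (0:ℝ) ≤ b - σ) hba.le,
        Real.div_rpow (by linarith [hσ.1.le] : (0:ℝ) ≤ σ - a) hba.le]
    ring
  have hbdd : ∀ σ ∈ Set.Ioc a b, ‖f' σ‖ ≤ (A + B) ^ (1/q) := by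
    intro σ hσ
    obtain ⟨h1, h2⟩ := hσ
    have hABq : |f' σ| ^ q ≤ A + B := by
      have h := hptw0 σ ⟨h1, h2⟩
      have ht1 : ((b - σ)/(b - a)) ^ s ≤ 1 :=
        Real.rpow_le_one (div_nonneg (by linarith) hba.le)
          (by rw [div_le_one hba]; linarith) hs0.le
      have ht2 : ((σ - a)/(b - a)) ^ s ≤ 1 :=
        Real.rpow_le_one (div_nonneg (by linarith) hba.le)
          (by rw [div_le_one hba]; linarith) hs0.le
      nlinarith [mul_le_of_le_one_left hA0 ht1, mul_le_of_le_one_left hB0 ht2]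
    have he : ((A + B) ^ (1/q)) ^ q = A + B := by
      rw [← Real.rpow_mul (by linarith), one_div, inv_mul_cancel₀ hq0.ne', Real.rpow_one]
    rw [Real.norm_eq_abs]
    by_contra hcon
    push_neg at hcon
    have := Real.rpow_lt_rpow (Real.rpow_nonneg (by linarith) _) hcon hq0
    rw [he] at this
    linarith
  have hmemf : MemLp f' (ENNReal.ofReal q) (volume.restrict (Set.Ioc a b)) :=
    MemLp.of_bound hmeas _ ((ae_restrict_iff' measurableSet_Ioc).2 (ae_of_all _ hbdd))
  have hLcont : Continuous L := by fun_prop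
  have hL0 : ∀ σ ∈ Set.Ioc a b, 0 ≤ L σ := by
    intro σ hσ
    simp only [hLdef]
    nlinarith [hσ.1, hσ.2, mul_nonneg hvu.le (by linarith [hσ.1.le] : (0:ℝ) ≤ σ - a),
      mul_nonneg hu.le hba.le]
  have hLb : ∀ σ ∈ Set.Ioc a b, ‖L σ‖ ≤ v * (b - a) := by
    intro σ hσ
    rw [Real.norm_eq_abs, abs_of_nonneg (hL0 σ hσ)]
    simp only [hLdef]
    nlinarith [hσ.2, mul_le_mul_of_nonneg_left hσ.2 hvu.le]
  have hmemL : MemLp L (ENNReal.ofReal p) (volume.restrict (Set.Ioc a b)) :=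
    MemLp.of_bound hLcont.aestronglyMeasurable _
      ((ae_restrict_iff' measurableSet_Ioc).2 (ae_of_all _ hLb))
  have hHold := MeasureTheory.integral_mul_norm_le_Lp_mul_Lq
    (μ := volume.restrict (Set.Ioc a b)) hpq' hmemL hmemf
  -- compute the Lp norm of L
  have hLp : (∫ σ in Set.Ioc a b, ‖L σ‖ ^ p) = (b - a) ^ (p+1) * C := by
    have h1 : (∫ σ in Set.Ioc a b, ‖L σ‖ ^ p) = ∫ σ in Set.Ioc a b, (L σ) ^ p :=
      setIntegral_congr_fun measurableSet_Ioc
        (fun σ hσ => by rw [Real.norm_eq_abs, abs_of_nonneg (hL0 σ hσ)])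
    rw [h1, ← intervalIntegral.integral_of_le hab]
    rw [show L = fun σ => ((v - u) * σ + -(v * a - u * b)) from funext fun σ => by
      simp only [hLdef]; ring]
    rw [intervalIntegral.integral_comp_mul_add (fun τ => τ ^ p) hvu.ne' (-(v * a - u * b))]
    rw [show (v - u) * a + -(v * a - u * b) = u * (b - a) from by ring,
        show (v - u) * b + -(v * a - u * b) = v * (b - a) from by ring]
    rw [integral_rpow (Or.inl (by linarith : (-1:ℝ) < p))]
    rw [Real.mul_rpow hu.le hba.le, Real.mul_rpow (by linarith : (0:ℝ) ≤ v) hba.le]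
    simp only [smul_eq_mul, hCdef]
    field_simp
  -- bound the Lq norm of f'
  have hg_ii1 : IntervalIntegrable (fun σ => (b - σ) ^ s) volume a b := by
    have h0 : IntervalIntegrable (fun τ : ℝ => τ ^ s) volume (b - a) (b - b) :=
      (intervalIntegral.intervalIntegrable_rpow (Or.inl hs0.le))
    simpa using h0.comp_sub_left b
  have hg_ii2 : IntervalIntegrable (fun σ => (σ - a) ^ s) volume a b := by
    have h0 : IntervalIntegrable (fun τ : ℝ => τ ^ s) volume (a - a) (b - a) :=
      (intervalIntegral.intervalIntegrable_rpow (Or.inl hs0.le))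
    simpa using h0.comp_sub_right a
  have hI1 : (∫ σ in a..b, (b - σ) ^ s) = (b - a) ^ (s+1) / (s+1) := by
    rw [intervalIntegral.integral_comp_sub_left (fun τ => τ ^ s) b]
    rw [integral_rpow (Or.inl (by linarith : (-1:ℝ) < s))]
    rw [sub_self, Real.zero_rpow (by linarith : s + 1 ≠ 0)]
    ring
  have hI2 : (∫ σ in a..b, (σ - a) ^ s) = (b - a) ^ (s+1) / (s+1) := by
    rw [intervalIntegral.integral_comp_sub_right (fun τ => τ ^ s) a]
    rw [integral_rpow (Or.inl (by linarith : (-1:ℝ) < s))]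
    rw [sub_self, Real.zero_rpow (by linarith : s + 1 ≠ 0)]
    ring
  set g : ℝ → ℝ := fun σ => ((b - σ) ^ s * A + (σ - a) ^ s * B) / (b - a) ^ s with hgdef
  have hgint : IntervalIntegrable g volume a b :=
    ((hg_ii1.mul_const A).add (hg_ii2.mul_const B)).div_const _
  have hgval : (∫ σ in a..b, g σ) = (b - a) * ((A + B) / (s+1)) := by
    simp only [hgdef]
    rw [intervalIntegral.integral_div]
    rw [intervalIntegral.integral_add (hg_ii1.mul_const A) (hg_ii2.mul_const B)]
    rw [intervalIntegral.integral_mul_const, intervalIntegral.integral_mul_const, hI1, hI2]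
    rw [Real.rpow_add hba s 1, Real.rpow_one]
    have hbs : (0:ℝ) < (b - a) ^ s := Real.rpow_pos_of_pos hba s
    field_simp
  have hQ0 : 0 ≤ ∫ σ in Set.Ioc a b, ‖f' σ‖ ^ q :=
    integral_nonneg fun σ => Real.rpow_nonneg (norm_nonneg _) _
  have hQ : (∫ σ in Set.Ioc a b, ‖f' σ‖ ^ q) ≤ (b - a) * ((A + B) / (s+1)) := by
    have hint1 : IntegrableOn (fun σ => ‖f' σ‖ ^ q) (Set.Ioc a b) := by
      have h := hmemf.integrable_norm_rpow (by simp [hq0, hq0.le] : ENNReal.ofReal q ≠ 0)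
        ENNReal.ofReal_ne_top
      simpa [IntegrableOn, ENNReal.toReal_ofReal hq0.le] using h
    have hint2 : IntegrableOn g (Set.Ioc a b) := hgint.1
    have hmono := setIntegral_mono_on hint1 hint2 measurableSet_Ioc
      (fun σ hσ => by rw [Real.norm_eq_abs]; exact hptw σ hσ)
    calc (∫ σ in Set.Ioc a b, ‖f' σ‖ ^ q) ≤ ∫ σ in Set.Ioc a b, g σ := hmono
      _ = ∫ σ in a..b, g σ := (intervalIntegral.integral_of_le hab).symm
      _ = (b - a) * ((A + B) / (s+1)) := hgval
  -- chain
  have step1 : |∫ σ in a..b, ((v - u) * σ - (v * a - u * b)) * f' σ|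
      ≤ ∫ σ in Set.Ioc a b, ‖L σ‖ * ‖f' σ‖ := by
    calc |∫ σ in a..b, ((v - u) * σ - (v * a - u * b)) * f' σ|
        ≤ ∫ σ in a..b, |((v - u) * σ - (v * a - u * b)) * f' σ| :=
          intervalIntegral.abs_integral_le_integral_abs hab
      _ = ∫ σ in a..b, ‖L σ‖ * ‖f' σ‖ :=
          intervalIntegral.integral_congr fun σ _ => by
            simp [hLdef, Real.norm_eq_abs, abs_mul]
      _ = ∫ σ in Set.Ioc a b, ‖L σ‖ * ‖f' σ‖ := intervalIntegral.integral_of_le hab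
  have step3 : ((b - a) ^ (p+1) * C) ^ (1/p) * ((b - a) * ((A + B) / (s+1))) ^ (1/q)
      = (b - a) ^ 2 * C ^ (1/p) * ((A + B) / (s+1)) ^ (1/q) := by
    rw [Real.mul_rpow (by positivity) hC0, Real.mul_rpow hba.le (by positivity),
        ← Real.rpow_natCast (b - a) 2, ← Real.rpow_mul hba.le]
    have hexp : (p + 1) * (1/p) + 1/q = ((2:ℕ) : ℝ) := by
      have h1q : 1/q = 1 - 1/p := by linarith
      rw [h1q]
      field_simp
      ring
    rw [← hexp, Real.rpow_add hba]
    ring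
  calc |∫ σ in a..b, ((v - u) * σ - (v * a - u * b)) * f' σ|
      ≤ ∫ σ in Set.Ioc a b, ‖L σ‖ * ‖f' σ‖ := step1
    _ ≤ (∫ σ in Set.Ioc a b, ‖L σ‖ ^ p) ^ (1/p) * (∫ σ in Set.Ioc a b, ‖f' σ‖ ^ q) ^ (1/q) :=
        hHold
    _ ≤ ((b - a) ^ (p+1) * C) ^ (1/p) * ((b - a) * ((A + B) / (s+1))) ^ (1/q) := by
        rw [hLp]
        exact mul_le_mul_of_nonneg_left (Real.rpow_le_rpow hQ0 hQ (by positivity))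
          (Real.rpow_nonneg (by positivity) _)
    _ = (b - a) ^ 2 * C ^ (1/p) * ((A + B) / (s+1)) ^ (1/q) := step3


theorem stmt_7 (f f' : ℝ → ℝ) (u v p q s : ℝ) (hu : 0 < u) (huv : u < v)
    (hq : 1 < q) (hpq : 1 / p + 1 / q = 1) (hs0 : 0 < s) (hs1 : s ≤ 1)
    (hderiv : ∀ y ∈ interior (Set.Ici (0:ℝ)), HasDerivAt f (f' y) y)
    (hint : IntervalIntegrable f' MeasureTheory.volume u v)
    (hsconv : ∀ a ∈ Set.Icc u v, ∀ b ∈ Set.Icc u v, ∀ t ∈ Set.Icc (0:ℝ) 1,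
      |f' (t * a + (1 - t) * b)| ^ q ≤ t ^ s * |f' a| ^ q + (1 - t) ^ s * |f' b| ^ q)
    (x : ℝ) (hx : x ∈ Set.Icc u v) :
    |((v - x) * (v * f v - u * f x) + (x - u) * (v * f x - u * f u)) / (v - u) ^ 2
        - (1 / (v - u)) * ∫ μ in u..v, f μ|
      ≤ ((v - x) ^ 2 / (v - u) ^ 2) *
          ((v ^ (p + 1) - u ^ (p + 1)) / ((p + 1) * (v - u))) ^ (1 / p) *
          ((|f' x| ^ q + |f' v| ^ q) / (s + 1)) ^ (1 / q)
        + ((x - u) ^ 2 / (v - u) ^ 2) *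
          ((v ^ (p + 1) - u ^ (p + 1)) / ((p + 1) * (v - u))) ^ (1 / p) *
          ((|f' x| ^ q + |f' u| ^ q) / (s + 1)) ^ (1 / q) := by
  obtain ⟨hx1, hx2⟩ := hx
  have hq0 : (0:ℝ) < q := by linarith
  have hp : 1 < p := by
    have h1 : 1/q < 1 := by rw [div_lt_one hq0]; exact hq
    have h2 : 0 < 1/q := by positivity
    have hpinv : 0 < 1/p := by linarith
    have hp0' : 0 < p := by
      rcases lt_trichotomy p 0 with h | h | h
      · exfalso; have : 1/p < 0 := by exact div_neg_of_pos_of_neg one_pos h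
        linarith
      · exfalso; rw [h] at hpinv; simp at hpinv
      · exact h
    have hplt : 1/p < 1 := by linarith
    rwa [div_lt_one hp0'] at hplt
  have hvu : (0:ℝ) < v - u := by linarith
  have hss : Set.Icc u v ⊆ interior (Set.Ici (0:ℝ)) := by
    rw [interior_Ici]
    intro y hy
    exact lt_of_lt_of_le hu hy.1
  have hderiv' : ∀ y ∈ Set.Icc u v, HasDerivAt f (f' y) y := fun y hy => hderiv y (hss hy)
  have hsub1 : Set.uIcc x v ⊆ Set.Icc u v := by
    rw [Set.uIcc_of_le hx2]; exact Set.Icc_subset_Icc hx1 le_rfl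
  have hsub2 : Set.uIcc u x ⊆ Set.Icc u v := by
    rw [Set.uIcc_of_le hx1]; exact Set.Icc_subset_Icc le_rfl hx2
  have hfc : ContinuousOn f (Set.Icc u v) :=
    fun y hy => ((hderiv' y hy).continuousAt).continuousWithinAt
  have hfint1 : IntervalIntegrable f volume u x := (hfc.mono hsub2).intervalIntegrable
  have hfint2 : IntervalIntegrable f volume x v := (hfc.mono hsub1).intervalIntegrable
  have huIcc : Set.uIcc u v = Set.Icc u v := Set.uIcc_of_le huv.le
  have hint1 : IntervalIntegrable f' volume u x :=
    hint.mono_set (by rw [huIcc]; exact hsub2)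
  have hint2 : IntervalIntegrable f' volume x v :=
    hint.mono_set (by rw [huIcc]; exact hsub1)
  have hintid2 : IntervalIntegrable (fun σ => σ * f' σ) volume x v :=
    hint2.continuousOn_mul (continuous_id.continuousOn)
  have hintid1 : IntervalIntegrable (fun σ => σ * f' σ) volume u x :=
    hint1.continuousOn_mul (continuous_id.continuousOn)
  have hparts2 : (∫ σ in x..v, σ * f' σ) = v * f v - x * f x - ∫ σ in x..v, f σ := by
    have h := intervalIntegral.integral_mul_deriv_eq_deriv_mul
      (u := fun σ => σ) (u' := fun _ => (1:ℝ)) (v := f) (v' := f')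
      (fun σ _ => hasDerivAt_id σ) (fun σ hσ => hderiv' σ (hsub1 hσ))
      intervalIntegrable_const hint2
    simpa using h
  have hparts1 : (∫ σ in u..x, σ * f' σ) = x * f x - u * f u - ∫ σ in u..x, f σ := by
    have h := intervalIntegral.integral_mul_deriv_eq_deriv_mul
      (u := fun σ => σ) (u' := fun _ => (1:ℝ)) (v := f) (v' := f')
      (fun σ _ => hasDerivAt_id σ) (fun σ hσ => hderiv' σ (hsub2 hσ))
      intervalIntegrable_const hint1
    simpa using h
  have hftc2 : (∫ σ in x..v, f' σ) = f v - f x :=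
    intervalIntegral.integral_eq_sub_of_hasDerivAt (fun σ hσ => hderiv' σ (hsub1 hσ)) hint2
  have hftc1 : (∫ σ in u..x, f' σ) = f x - f u :=
    intervalIntegral.integral_eq_sub_of_hasDerivAt (fun σ hσ => hderiv' σ (hsub2 hσ)) hint1
  have hA1 : (∫ σ in x..v, ((v - u) * σ - (v * x - u * v)) * f' σ)
      = (v - u) * (v * f v - x * f x - ∫ σ in x..v, f σ) - (v * x - u * v) * (f v - f x) := by
    have hcong : (∫ σ in x..v, ((v - u) * σ - (v * x - u * v)) * f' σ)
        = ∫ σ in x..v, ((v - u) * (σ * f' σ) - (v * x - u * v) * f' σ) :=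
      intervalIntegral.integral_congr fun σ _ => by ring
    rw [hcong, intervalIntegral.integral_sub ((hintid2).const_mul _) ((hint2).const_mul _),
        intervalIntegral.integral_const_mul, intervalIntegral.integral_const_mul,
        hparts2, hftc2]
  have hA2 : (∫ σ in u..x, ((v - u) * σ - (v * u - u * x)) * f' σ)
      = (v - u) * (x * f x - u * f u - ∫ σ in u..x, f σ) - (v * u - u * x) * (f x - f u) := by
    have hcong : (∫ σ in u..x, ((v - u) * σ - (v * u - u * x)) * f' σ)
        = ∫ σ in u..x, ((v - u) * (σ * f' σ) - (v * u - u * x) * f' σ) :=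
      intervalIntegral.integral_congr fun σ _ => by ring
    rw [hcong, intervalIntegral.integral_sub ((hintid1).const_mul _) ((hint1).const_mul _),
        intervalIntegral.integral_const_mul, intervalIntegral.integral_const_mul,
        hparts1, hftc1]
  have hsplit : (∫ μ in u..v, f μ) = (∫ σ in u..x, f σ) + ∫ σ in x..v, f σ :=
    (intervalIntegral.integral_add_adjacent_intervals hfint1 hfint2).symm
  -- the key identity
  have hkey : ((v - x) * (v * f v - u * f x) + (x - u) * (v * f x - u * f u)) / (v - u) ^ 2
      - (1 / (v - u)) * ∫ μ in u..v, f μ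
      = ((∫ σ in x..v, ((v - u) * σ - (v * x - u * v)) * f' σ)
        + ∫ σ in u..x, ((v - u) * σ - (v * u - u * x)) * f' σ) / (v - u) ^ 2 := by
    rw [hA1, hA2, hsplit]
    field_simp
    ring
  -- the two Hoelder bounds
  have hmeas2 : AEStronglyMeasurable f' (volume.restrict (Set.Ioc x v)) :=
    hint2.1.aestronglyMeasurable
  have hmeas1 : AEStronglyMeasurable f' (volume.restrict (Set.Ioc u x)) :=
    hint1.1.aestronglyMeasurable
  have hb1 := aux7 f' u v p q s x v hu huv hp hq hpq hs0 hs1 hx1 hx2 le_rfl hmeas2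
    (fun t ht => hsconv x ⟨hx1, hx2⟩ v (Set.right_mem_Icc.2 huv.le) t ht)
  have hb2 := aux7 f' u v p q s u x hu huv hp hq hpq hs0 hs1 le_rfl hx1 hx2 hmeas1
    (fun t ht => hsconv u (Set.left_mem_Icc.2 huv.le) x ⟨hx1, hx2⟩ t ht)
  rw [add_comm (|f' u| ^ q)] at hb2
  rw [hkey, abs_div, abs_of_nonneg (by positivity : (0:ℝ) ≤ (v - u) ^ 2)]
  have habs : |(∫ σ in x..v, ((v - u) * σ - (v * x - u * v)) * f' σ)
      + ∫ σ in u..x, ((v - u) * σ - (v * u - u * x)) * f' σ|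
      ≤ (v - x) ^ 2 * ((v ^ (p + 1) - u ^ (p + 1)) / ((p + 1) * (v - u))) ^ (1 / p)
          * ((|f' x| ^ q + |f' v| ^ q) / (s + 1)) ^ (1 / q)
        + (x - u) ^ 2 * ((v ^ (p + 1) - u ^ (p + 1)) / ((p + 1) * (v - u))) ^ (1 / p)
          * ((|f' x| ^ q + |f' u| ^ q) / (s + 1)) ^ (1 / q) :=
    (abs_add_le _ _).trans (add_le_add hb1 hb2)
  calc |(∫ σ in x..v, ((v - u) * σ - (v * x - u * v)) * f' σ)
      + ∫ σ in u..x, ((v - u) * σ - (v * u - u * x)) * f' σ| / (v - u) ^ 2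
      ≤ ((v - x) ^ 2 * ((v ^ (p + 1) - u ^ (p + 1)) / ((p + 1) * (v - u))) ^ (1 / p)
          * ((|f' x| ^ q + |f' v| ^ q) / (s + 1)) ^ (1 / q)
        + (x - u) ^ 2 * ((v ^ (p + 1) - u ^ (p + 1)) / ((p + 1) * (v - u))) ^ (1 / p)
          * ((|f' x| ^ q + |f' u| ^ q) / (s + 1)) ^ (1 / q)) / (v - u) ^ 2 := by
        gcongr
    _ = _ := by ring
end

section
/- Let J = [0,∞) and let f : J → ℝ be differentiable on the interior of J with f' integrable on [u,v], where u, v ∈ J and 0 < u < v. Let q > 1 and p satisfy 1/p + 1/q = 1, and let s ∈ (0,1]. If |f'|^q is s-convex in the second sense on [u,v], then |(v·f(v) - u·f(u))/(v-u) - (1/(v-u))·∫_u^v f(μ) dμ| ≤ L_p(u,v)·((|f'(u)|^q + |f'(v)|^q)/(s+1))^{1/q}. -/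
open MeasureTheory intervalIntegral Set Real

theorem stmt_8 (f f' : ℝ → ℝ) (u v p q s : ℝ) (hu : 0 < u) (huv : u < v)
    (hq : 1 < q) (hpq : 1 / p + 1 / q = 1) (hs0 : 0 < s) (hs1 : s ≤ 1)
    (hderiv : ∀ y ∈ interior (Set.Ici (0:ℝ)), HasDerivAt f (f' y) y)
    (hint : IntervalIntegrable f' MeasureTheory.volume u v)
    (hsconv : ∀ a ∈ Set.Icc u v, ∀ b ∈ Set.Icc u v, ∀ t ∈ Set.Icc (0:ℝ) 1,
      |f' (t * a + (1 - t) * b)| ^ q ≤ t ^ s * |f' a| ^ q + (1 - t) ^ s * |f' b| ^ q) :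
    |(v * f v - u * f u) / (v - u) - (1 / (v - u)) * ∫ μ in u..v, f μ|
      ≤ ((v ^ (p + 1) - u ^ (p + 1)) / ((p + 1) * (v - u))) ^ (1 / p) *
          ((|f' u| ^ q + |f' v| ^ q) / (s + 1)) ^ (1 / q) := by
  have hv0 : 0 < v := hu.trans huv
  have huv' : u ≤ v := huv.le
  have hvu : 0 < v - u := sub_pos.mpr huv
  have hq0 : 0 < q := lt_trans one_pos hq
  have hcq : Real.HolderConjugate q p := Real.holderConjugate_iff.mpr ⟨hq, by simp only [← one_div]; linarith⟩
  have hcp : Real.HolderConjugate p q := hcq.symm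
  have hp1 : 1 < p := (Real.holderConjugate_iff.mp hcp).1
  have hp0 : 0 < p := lt_trans one_pos hp1
  set A := |f' u| ^ q with hA
  set B := |f' v| ^ q with hB
  have hA0 : 0 ≤ A := Real.rpow_nonneg (abs_nonneg _) _
  have hB0 : 0 ≤ B := Real.rpow_nonneg (abs_nonneg _) _
  -- pointwise s-convexity bound
  have hpt : ∀ x ∈ Set.Icc u v,
      |f' x| ^ q ≤ ((x - u)/(v - u)) ^ s * B + ((v - x)/(v - u)) ^ s * A := by
    intro x hx
    have ht0 : 0 ≤ (x - u)/(v - u) := div_nonneg (by linarith [hx.1]) hvu.le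
    have ht1 : (x - u)/(v - u) ≤ 1 := (div_le_one hvu).mpr (by linarith [hx.2])
    have h1t : 1 - (x - u)/(v - u) = (v - x)/(v - u) := by field_simp; ring
    have hxe : (x - u)/(v - u) * v + (1 - (x - u)/(v - u)) * u = x := by
      field_simp
      ring
    have h := hsconv v (Set.right_mem_Icc.mpr huv') u (Set.left_mem_Icc.mpr huv')
      ((x - u)/(v - u)) ⟨ht0, ht1⟩
    rw [hxe, h1t] at h
    exact h
  -- uniform bound
  have hbd : ∀ x ∈ Set.Icc u v, |f' x| ^ q ≤ A + B := by
    intro x hx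
    have h := hpt x hx
    have ht0 : 0 ≤ (x - u)/(v - u) := div_nonneg (by linarith [hx.1]) hvu.le
    have ht1 : (x - u)/(v - u) ≤ 1 := (div_le_one hvu).mpr (by linarith [hx.2])
    have hs0' : 0 ≤ (v - x)/(v - u) := div_nonneg (by linarith [hx.2]) hvu.le
    have hs1' : (v - x)/(v - u) ≤ 1 := (div_le_one hvu).mpr (by linarith [hx.1])
    have e1 : ((x - u)/(v - u)) ^ s ≤ 1 := Real.rpow_le_one ht0 ht1 hs0.le
    have e2 : ((v - x)/(v - u)) ^ s ≤ 1 := Real.rpow_le_one hs0' hs1' hs0.le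
    nlinarith [Real.rpow_nonneg ht0 s, Real.rpow_nonneg hs0' s]
  -- integration by parts
  have hderiv2 : ∀ x ∈ Set.uIcc u v, HasDerivAt f (f' x) x := by
    intro x hx
    rw [Set.uIcc_of_le huv'] at hx
    apply hderiv
    rw [interior_Ici]
    exact Set.mem_Ioi.mpr (hu.trans_le hx.1)
  have parts := intervalIntegral.integral_mul_deriv_eq_deriv_mul
    (u := fun y => y) (u' := fun _ => (1:ℝ)) (v := f) (v' := f')
    (fun x _ => hasDerivAt_id x) hderiv2 intervalIntegrable_const hint
  simp only [one_mul] at parts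
  have key : (v * f v - u * f u) / (v - u) - (1 / (v - u)) * ∫ μ in u..v, f μ
      = (∫ x in u..v, x * f' x) / (v - u) := by
    rw [parts]; field_simp
  -- measure setup
  set μ0 := MeasureTheory.volume.restrict (Set.Ioc u v) with hμ0
  haveI : MeasureTheory.IsFiniteMeasure μ0 := ⟨by
    rw [MeasureTheory.Measure.restrict_apply_univ]; exact measure_Ioc_lt_top⟩
  have hmemIcc : ∀ᵐ x ∂μ0, x ∈ Set.Icc u v := by
    filter_upwards [MeasureTheory.ae_restrict_mem measurableSet_Ioc] with x hx
    exact Set.Ioc_subset_Icc_self hx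
  have hmeas : MeasureTheory.AEStronglyMeasurable f' μ0 := hint.1.aestronglyMeasurable
  -- Memℒp facts
  have hCq : 0 ≤ A + B := by linarith
  have hbd' : ∀ᵐ x ∂μ0, ‖f' x‖ ≤ (A + B) ^ (1/q) := by
    filter_upwards [hmemIcc] with x hx
    have h := hbd x hx
    have : (|f' x| ^ q) ^ (1/q) ≤ (A + B) ^ (1/q) :=
      Real.rpow_le_rpow (Real.rpow_nonneg (abs_nonneg _) _) h (by positivity)
    rw [one_div, Real.rpow_rpow_inv (abs_nonneg _) hq0.ne'] at this
    rw [Real.norm_eq_abs, one_div]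
    exact this
  have hmem2 : MeasureTheory.MemLp f' (ENNReal.ofReal q) μ0 :=
    MeasureTheory.MemLp.of_bound hmeas _ hbd'
  have hmem1 : MeasureTheory.MemLp (fun x : ℝ => x) (ENNReal.ofReal p) μ0 := by
    apply MeasureTheory.MemLp.of_bound measurable_id.aestronglyMeasurable v
    filter_upwards [hmemIcc] with x hx
    simp only [id, Real.norm_eq_abs]
    rw [abs_of_pos (hu.trans_le hx.1)]
    exact hx.2
  have hHolder := MeasureTheory.integral_mul_norm_le_Lp_mul_Lq hcp hmem1 hmem2
  -- interval-integral forms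
  have E1 : ∫ x, ‖x‖ * ‖f' x‖ ∂μ0 = ∫ x in u..v, |x * f' x| := by
    rw [intervalIntegral.integral_of_le huv']
    apply MeasureTheory.integral_congr_ae
    filter_upwards [hmemIcc] with x hx
    rw [Real.norm_eq_abs, Real.norm_eq_abs, abs_mul]
  have E2 : ∫ x, ‖x‖ ^ p ∂μ0 = (v ^ (p+1) - u ^ (p+1)) / (p+1) := by
    rw [← integral_rpow (Or.inl (by linarith : (-1:ℝ) < p)),
      intervalIntegral.integral_of_le huv']
    apply MeasureTheory.integral_congr_ae
    filter_upwards [hmemIcc] with x hx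
    rw [Real.norm_eq_abs, abs_of_pos (hu.trans_le hx.1)]
  have E3 : ∫ x, ‖f' x‖ ^ q ∂μ0 = ∫ x in u..v, |f' x| ^ q := by
    rw [intervalIntegral.integral_of_le huv']
    apply MeasureTheory.integral_congr_ae
    filter_upwards [] with x
    rw [Real.norm_eq_abs]
  set Xp := (v ^ (p+1) - u ^ (p+1)) / (p+1) with hXpdef
  set Y := ∫ x in u..v, |f' x| ^ q with hYdef
  have hXp0 : 0 ≤ Xp := by
    rw [← E2]
    exact MeasureTheory.integral_nonneg fun x => Real.rpow_nonneg (norm_nonneg _) _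
  have hY0 : 0 ≤ Y :=
    intervalIntegral.integral_nonneg huv' fun x _ => Real.rpow_nonneg (abs_nonneg _) _
  rw [E1, E2, E3] at hHolder
  -- integrability of |f'|^q and continuity of the comparison functions
  have hqmeas : MeasureTheory.AEStronglyMeasurable (fun x => |f' x| ^ q) μ0 :=
    (hmeas.norm.aemeasurable.pow aemeasurable_const).aestronglyMeasurable
  have hintq : IntervalIntegrable (fun x => |f' x| ^ q) MeasureTheory.volume u v := by
    rw [intervalIntegrable_iff_integrableOn_Ioc_of_le huv']
    apply MeasureTheory.Integrable.mono' (g := fun _ => A + B)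
      (MeasureTheory.integrableOn_const measure_Ioc_lt_top.ne) hqmeas
    filter_upwards [hmemIcc] with x hx
    rw [Real.norm_eq_abs, abs_of_nonneg (Real.rpow_nonneg (abs_nonneg _) _)]
    exact hbd x hx
  have hcont1 : Continuous (fun x : ℝ => ((x - u)/(v - u)) ^ s) := by
    rw [continuous_iff_continuousAt]
    intro x
    exact (((continuous_id.sub continuous_const).continuousAt).div_const _).rpow_const
      (Or.inr hs0.le)
  have hcont2 : Continuous (fun x : ℝ => ((v - x)/(v - u)) ^ s) := by
    rw [continuous_iff_continuousAt]
    intro x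
    exact (((continuous_const.sub continuous_id).continuousAt).div_const _).rpow_const
      (Or.inr hs0.le)
  -- the two elementary integrals
  have hbase : ∫ x in (0:ℝ)..(v - u), (x / (v - u)) ^ s = (v - u) / (s + 1) := by
    rw [intervalIntegral.integral_comp_div (f := fun y : ℝ => y ^ s) hvu.ne',
      zero_div, div_self hvu.ne', integral_rpow (Or.inl (by linarith))]
    rw [Real.one_rpow, Real.zero_rpow (by linarith), smul_eq_mul]
    ring
  have hI1 : ∫ x in u..v, ((x - u)/(v - u)) ^ s = (v - u) / (s + 1) := by
    have h1 := intervalIntegral.integral_comp_sub_right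
      (f := fun y : ℝ => (y / (v - u)) ^ s) (a := u) (b := v) u
    rw [sub_self] at h1
    rw [h1, hbase]
  have hI2 : ∫ x in u..v, ((v - x)/(v - u)) ^ s = (v - u) / (s + 1) := by
    have h1 := intervalIntegral.integral_comp_sub_left
      (f := fun y : ℝ => (y / (v - u)) ^ s) (a := u) (b := v) v
    rw [sub_self] at h1
    rw [h1, hbase]
  have hC0 : 0 ≤ (A + B) / (s + 1) := by positivity
  have hY : Y ≤ (v - u) * ((A + B) / (s + 1)) := by
    have hmono := intervalIntegral.integral_mono_on huv' hintq
      (((hcont1.mul continuous_const).add (hcont2.mul continuous_const)).intervalIntegrable u v)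
      hpt
    simp only [Pi.add_apply, Pi.mul_apply] at hmono
    rw [intervalIntegral.integral_add ((hcont1.intervalIntegrable u v).mul_const _)
        ((hcont2.intervalIntegrable u v).mul_const _),
      intervalIntegral.integral_mul_const, intervalIntegral.integral_mul_const,
      hI1, hI2] at hmono
    rw [hYdef]
    refine hmono.trans (le_of_eq ?_)
    field_simp
    ring
  -- final assembly
  rw [key, abs_div, abs_of_pos hvu, ← div_div, hXpdef.symm]
  have split : (v - u) ^ (1/p) * (v - u) ^ (1/q) = v - u := by
    rw [← Real.rpow_add hvu, hpq, Real.rpow_one]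
  calc |∫ x in u..v, x * f' x| / (v - u)
      ≤ (∫ x in u..v, |x * f' x|) / (v - u) := by
        gcongr
        exact intervalIntegral.abs_integral_le_integral_abs huv'
    _ ≤ (Xp ^ (1/p) * Y ^ (1/q)) / (v - u) := by gcongr
    _ ≤ (Xp ^ (1/p) * ((v - u) * ((A + B) / (s + 1))) ^ (1/q)) / (v - u) := by
        gcongr
    _ = (Xp / (v - u)) ^ (1/p) * ((A + B) / (s + 1)) ^ (1/q) := by
        rw [Real.mul_rpow hvu.le hC0, Real.div_rpow hXp0 hvu.le]
        set b := (v - u) ^ (1/p) with hbdef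
        set c := (v - u) ^ (1/q) with hcdef
        have hbpos : 0 < b := Real.rpow_pos_of_pos hvu _
        have hcpos : 0 < c := Real.rpow_pos_of_pos hvu _
        rw [← split]
        field_simp
end

section
/- Let J = [0,∞) and let f : J → ℝ be differentiable on the interior of J with f' integrable on [u,v], where u, v ∈ J and 0 < u < v. Let q > 1 and p satisfy 1/p + 1/q = 1, and let s ∈ (0,1]. If |f'|^q is s-convex in the second sense on [u,v], then |(v·f(v) - u·f(u))/(2(v-u)) + (1/2)·f((u+v)/2) - (1/(v-u))·∫_u^v f(μ) dμ| ≤ (L_p(u,v)/4)·[((|f'((u+v)/2)|^q + |f'(v)|^q)/(s+1))^{1/q} + ((|f'((u+v)/2)|^q + |f'(u)|^q)/(s+1))^{1/q}] ≤ (L_p(u,v)/4)·[(|f'((u+v)/2)|^q + |f'(v)|^q)^{1/q} + (|f'((u+v)/2)|^q + |f'(u)|^q)^{1/q}]. -/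
open MeasureTheory intervalIntegral Set

lemma stmt9_half (f' : ℝ → ℝ) (u v a b c p q s : ℝ) (hu : 0 < u) (huv : u < v)
    (hq : 1 < q) (hpq : 1 / p + 1 / q = 1) (hp : 1 < p) (hs0 : 0 < s) (hs1 : s ≤ 1)
    (hab : a < b) (hca : 2 * a - c = u) (hcb : 2 * b - c = v)
    (hint : IntervalIntegrable f' MeasureTheory.volume a b)
    (hconv : ∀ t ∈ Set.Icc (0:ℝ) 1,
      |f' (t * b + (1 - t) * a)| ^ q ≤ t ^ s * |f' b| ^ q + (1 - t) ^ s * |f' a| ^ q) :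
    |∫ μ in a..b, (2 * μ - c) * f' μ|
      ≤ ((v ^ (p + 1) - u ^ (p + 1)) / ((p + 1) * (v - u))) ^ (1 / p) * ((v - u) / 2)
          * ((|f' a| ^ q + |f' b| ^ q) / (s + 1)) ^ (1 / q) := by
  have hba : b - a = (v - u) / 2 := by linarith
  have hba0 : (0:ℝ) < b - a := by linarith
  have hvu0 : (0:ℝ) < v - u := by linarith
  have hq0 : (0:ℝ) < q := by linarith
  have hp0 : (0:ℝ) < p := by linarith
  have hpq' : Real.HolderConjugate p q := ⟨by simpa [one_div] using hpq, hp0, hq0⟩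
  set ν : Measure ℝ := volume.restrict (Set.Ioc a b) with hν
  haveI : IsFiniteMeasure ν := by
    constructor
    rw [hν, Measure.restrict_apply_univ, Real.volume_Ioc]
    exact ENNReal.ofReal_lt_top
  have hmem : ∀ᵐ x ∂ν, x ∈ Set.Ioc a b := ae_restrict_mem measurableSet_Ioc
  -- pointwise convexity bound in terms of x
  set A := |f' a| ^ q with hA
  set B := |f' b| ^ q with hB
  have hA0 : 0 ≤ A := Real.rpow_nonneg (abs_nonneg _) q
  have hB0 : 0 ≤ B := Real.rpow_nonneg (abs_nonneg _) q
  have hptwise : ∀ x ∈ Set.Icc a b,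
      |f' x| ^ q ≤ ((x - a) / (b - a)) ^ s * B + ((b - x) / (b - a)) ^ s * A := by
    intro x hx
    have ht : (x - a) / (b - a) ∈ Set.Icc (0:ℝ) 1 := by
      constructor
      · exact div_nonneg (by linarith [hx.1]) hba0.le
      · rw [div_le_one hba0]; linarith [hx.2]
    have := hconv _ ht
    have h1 : 1 - (x - a) / (b - a) = (b - x) / (b - a) := by
      field_simp
      ring
    have h2 : (x - a) / (b - a) * b + (1 - (x - a) / (b - a)) * a = x := by
      field_simp; ring
    rw [h2, h1] at this
    linarith
  -- measurability
  have hmeasf' : AEStronglyMeasurable f' ν := hint.1.aestronglyMeasurable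
  -- bound on |f'|^q on the interval
  have hbound2 : ∀ x ∈ Set.Icc a b, |f' x| ^ q ≤ B + A := by
    intro x hx'
    have h1 := hptwise x hx'
    have ht1 : ((x - a) / (b - a)) ^ s ≤ 1 := by
      apply Real.rpow_le_one (div_nonneg (by linarith [hx'.1]) hba0.le) _ hs0.le
      rw [div_le_one hba0]; linarith [hx'.2]
    have ht2 : ((b - x) / (b - a)) ^ s ≤ 1 := by
      apply Real.rpow_le_one (div_nonneg (by linarith [hx'.2]) hba0.le) _ hs0.le
      rw [div_le_one hba0]; linarith [hx'.1]
    nlinarith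
  have hCbound : ∀ᵐ x ∂ν, ‖|f' x|‖ ≤ (B + A) ^ (1/q) := by
    filter_upwards [hmem] with x hx
    have h2 := hbound2 x ⟨hx.1.le, hx.2⟩
    have h3 : |f' x| = (|f' x| ^ q) ^ (1/q) := by
      rw [← Real.rpow_mul (abs_nonneg _), mul_one_div, div_self hq0.ne', Real.rpow_one]
    rw [Real.norm_eq_abs, abs_abs, h3]
    exact Real.rpow_le_rpow (Real.rpow_nonneg (abs_nonneg _) q) h2 (by positivity)
  -- Memℒp facts
  have hmabs : AEStronglyMeasurable (fun x => |f' x|) ν := by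
    simpa [Real.norm_eq_abs] using hmeasf'.norm
  have hMemg : MemLp (fun x => |f' x|) (ENNReal.ofReal q) ν :=
    MemLp.of_bound hmabs _ hCbound
  have hMemw : MemLp (fun x => 2 * x - c) (ENNReal.ofReal p) ν := by
    apply MemLp.of_bound ((continuous_const.mul continuous_id').sub continuous_const).aestronglyMeasurable v
    filter_upwards [hmem] with x hx
    show ‖2 * x - c‖ ≤ v
    rw [Real.norm_eq_abs, abs_le]
    constructor <;> [linarith [hx.1]; linarith [hx.2]]
  have hw_nonneg : 0 ≤ᵐ[ν] fun x => 2 * x - c := by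
    filter_upwards [hmem] with x hx; simp only [Pi.zero_apply]; linarith [hx.1]
  have hg_nonneg : 0 ≤ᵐ[ν] fun x => |f' x| :=
    Filter.Eventually.of_forall fun x => abs_nonneg _
  have holder : ∫ x, (2 * x - c) * |f' x| ∂ν
      ≤ (∫ x, (2 * x - c) ^ p ∂ν) ^ (1/p) * (∫ x, |f' x| ^ q ∂ν) ^ (1/q) :=
    integral_mul_le_Lp_mul_Lq_of_nonneg hpq' hw_nonneg hg_nonneg hMemw hMemg
  -- step 1
  have step1 : |∫ μ in a..b, (2 * μ - c) * f' μ| ≤ ∫ x, (2 * x - c) * |f' x| ∂ν := by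
    refine le_trans (intervalIntegral.abs_integral_le_integral_abs hab.le) (le_of_eq ?_)
    rw [intervalIntegral.integral_of_le hab.le]
    refine setIntegral_congr_fun measurableSet_Ioc fun x hx => ?_
    rw [abs_mul, abs_of_nonneg (by linarith [hx.1] : (0:ℝ) ≤ 2 * x - c)]
  -- weight integral
  have hwint : ∫ x, (2 * x - c) ^ p ∂ν = (v ^ (p + 1) - u ^ (p + 1)) / (2 * (p + 1)) := by
    rw [← intervalIntegral.integral_of_le hab.le]
    have h := intervalIntegral.integral_comp_mul_sub (a := a) (b := b)
      (fun y => y ^ p) (by norm_num : (2:ℝ) ≠ 0) c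
    rw [h, hca, hcb, integral_rpow (Or.inl (by linarith))]
    rw [smul_eq_mul]
    field_simp
  -- integral of the convexity majorant
  have hrint1 : (∫ x in a..b, ((x - a) / (b - a)) ^ s) = (b - a) / (s + 1) := by
    have h1 : (∫ x in a..b, ((x - a) / (b - a)) ^ s)
        = ∫ x in a - a..b - a, (x / (b - a)) ^ s :=
      intervalIntegral.integral_comp_sub_right (fun y => (y / (b - a)) ^ s) a
    have h2 : (∫ x in a - a..b - a, (x / (b - a)) ^ s)
        = (b - a) • ∫ x in (a - a) / (b - a)..(b - a) / (b - a), x ^ s :=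
      intervalIntegral.integral_comp_div (fun y => y ^ s) hba0.ne'
    rw [h1, h2, sub_self, zero_div, div_self hba0.ne',
      integral_rpow (Or.inl (by linarith)), smul_eq_mul]
    rw [Real.one_rpow, Real.zero_rpow (by linarith : s + 1 ≠ 0)]
    ring
  have hrint2 : (∫ x in a..b, ((b - x) / (b - a)) ^ s) = (b - a) / (s + 1) := by
    have h1 : (∫ x in a..b, ((b - x) / (b - a)) ^ s)
        = ∫ x in b - b..b - a, (x / (b - a)) ^ s :=
      intervalIntegral.integral_comp_sub_left (fun y => (y / (b - a)) ^ s) b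
    have h2 : (∫ x in b - b..b - a, (x / (b - a)) ^ s)
        = (b - a) • ∫ x in (b - b) / (b - a)..(b - a) / (b - a), x ^ s :=
      intervalIntegral.integral_comp_div (fun y => y ^ s) hba0.ne'
    rw [h1, h2, sub_self, zero_div, div_self hba0.ne',
      integral_rpow (Or.inl (by linarith)), smul_eq_mul]
    rw [Real.one_rpow, Real.zero_rpow (by linarith : s + 1 ≠ 0)]
    ring
  -- integrability of both sides
  have hcont1 : ContinuousOn (fun x => ((x - a) / (b - a)) ^ s * B) (Set.uIcc a b) := by
    apply ContinuousOn.mul _ continuousOn_const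
    exact ContinuousOn.rpow_const ((continuousOn_id.sub continuousOn_const).div_const _)
      (fun x _ => Or.inr hs0.le)
  have hcont2 : ContinuousOn (fun x => ((b - x) / (b - a)) ^ s * A) (Set.uIcc a b) := by
    apply ContinuousOn.mul _ continuousOn_const
    exact ContinuousOn.rpow_const ((continuousOn_const.sub continuousOn_id).div_const _)
      (fun x _ => Or.inr hs0.le)
  have hInt2 : Integrable (fun x => ((x - a) / (b - a)) ^ s * B
      + ((b - x) / (b - a)) ^ s * A) ν :=
    ((hcont1.add hcont2).intervalIntegrable).1
  have hInt1 : Integrable (fun x => |f' x| ^ q) ν := by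
    apply Integrable.mono' (integrable_const (B + A))
      ((hmabs.aemeasurable.pow_const q).aestronglyMeasurable)
    filter_upwards [hmem] with x hx
    rw [Real.norm_eq_abs, abs_of_nonneg (Real.rpow_nonneg (abs_nonneg _) q)]
    exact hbound2 x ⟨hx.1.le, hx.2⟩
  have hIq : ∫ x, |f' x| ^ q ∂ν ≤ (b - a) * ((A + B) / (s + 1)) := by
    have hle : ∫ x, |f' x| ^ q ∂ν
        ≤ ∫ x, (((x - a) / (b - a)) ^ s * B + ((b - x) / (b - a)) ^ s * A) ∂ν := by
      refine integral_mono_ae hInt1 hInt2 ?_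
      filter_upwards [hmem] with x hx
      exact hptwise x ⟨hx.1.le, hx.2⟩
    refine hle.trans (le_of_eq ?_)
    rw [← intervalIntegral.integral_of_le hab.le]
    rw [intervalIntegral.integral_add
        (hcont1.intervalIntegrable) (hcont2.intervalIntegrable),
      intervalIntegral.integral_mul_const, intervalIntegral.integral_mul_const,
      hrint1, hrint2]
    ring
  -- assemble
  have hE0 : 0 ≤ (A + B) / (s + 1) := by positivity
  have hd0 : (0:ℝ) < (v - u) / 2 := by linarith
  have hW0 : (0:ℝ) ≤ v ^ (p + 1) - u ^ (p + 1) :=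
    sub_nonneg.2 (Real.rpow_le_rpow hu.le huv.le (by linarith))
  have hL0 : (0:ℝ) ≤ (v ^ (p + 1) - u ^ (p + 1)) / ((p + 1) * (v - u)) :=
    div_nonneg hW0 (by positivity)
  have hIq0 : 0 ≤ ∫ x, |f' x| ^ q ∂ν :=
    integral_nonneg fun x => Real.rpow_nonneg (abs_nonneg _) q
  have hfac1 : (∫ x, (2 * x - c) ^ p ∂ν) ^ (1 / p)
      = (((v ^ (p + 1) - u ^ (p + 1)) / ((p + 1) * (v - u))) * ((v - u) / 2)) ^ (1 / p) := by
    rw [hwint]; congr 1; field_simp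
  have hfac2 : (∫ x, |f' x| ^ q ∂ν) ^ (1 / q)
      ≤ (((v - u) / 2) * ((A + B) / (s + 1))) ^ (1 / q) := by
    refine Real.rpow_le_rpow hIq0 ?_ (by positivity)
    rw [← hba]
    exact hIq.trans (le_of_eq (by ring))
  have hmain : |∫ μ in a..b, (2 * μ - c) * f' μ|
      ≤ (((v ^ (p + 1) - u ^ (p + 1)) / ((p + 1) * (v - u))) * ((v - u) / 2)) ^ (1 / p)
        * (((v - u) / 2) * ((A + B) / (s + 1))) ^ (1 / q) := by
    refine (step1.trans holder).trans ?_
    rw [hfac1]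
    exact mul_le_mul_of_nonneg_left hfac2 (Real.rpow_nonneg (by positivity) _)
  refine hmain.trans (le_of_eq ?_)
  rw [Real.mul_rpow hL0 hd0.le, Real.mul_rpow hd0.le hE0]
  have hdd : ((v - u) / 2) ^ (1 / p) * ((v - u) / 2) ^ (1 / q) = (v - u) / 2 := by
    rw [← Real.rpow_add hd0, hpq, Real.rpow_one]
  linear_combination (((v ^ (p + 1) - u ^ (p + 1)) / ((p + 1) * (v - u))) ^ (1 / p)
    * ((A + B) / (s + 1)) ^ (1 / q)) * hdd

theorem stmt_9 (f f' : ℝ → ℝ) (u v p q s : ℝ) (hu : 0 < u) (huv : u < v)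
    (hq : 1 < q) (hpq : 1 / p + 1 / q = 1) (hs0 : 0 < s) (hs1 : s ≤ 1)
    (hderiv : ∀ y ∈ interior (Set.Ici (0:ℝ)), HasDerivAt f (f' y) y)
    (hint : IntervalIntegrable f' MeasureTheory.volume u v)
    (hsconv : ∀ a ∈ Set.Icc u v, ∀ b ∈ Set.Icc u v, ∀ t ∈ Set.Icc (0:ℝ) 1,
      |f' (t * a + (1 - t) * b)| ^ q ≤ t ^ s * |f' a| ^ q + (1 - t) ^ s * |f' b| ^ q) :
    |(v * f v - u * f u) / (2 * (v - u)) + (1 / 2) * f ((u + v) / 2)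
        - (1 / (v - u)) * ∫ μ in u..v, f μ|
      ≤ (((v ^ (p + 1) - u ^ (p + 1)) / ((p + 1) * (v - u))) ^ (1 / p) / 4) *
          (((|f' ((u + v) / 2)| ^ q + |f' v| ^ q) / (s + 1)) ^ (1 / q)
            + ((|f' ((u + v) / 2)| ^ q + |f' u| ^ q) / (s + 1)) ^ (1 / q))
    ∧ (((v ^ (p + 1) - u ^ (p + 1)) / ((p + 1) * (v - u))) ^ (1 / p) / 4) *
          (((|f' ((u + v) / 2)| ^ q + |f' v| ^ q) / (s + 1)) ^ (1 / q)
            + ((|f' ((u + v) / 2)| ^ q + |f' u| ^ q) / (s + 1)) ^ (1 / q))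
      ≤ (((v ^ (p + 1) - u ^ (p + 1)) / ((p + 1) * (v - u))) ^ (1 / p) / 4) *
          ((|f' ((u + v) / 2)| ^ q + |f' v| ^ q) ^ (1 / q)
            + (|f' ((u + v) / 2)| ^ q + |f' u| ^ q) ^ (1 / q)) := by
  have hvu0 : (0:ℝ) < v - u := by linarith
  have hq0 : (0:ℝ) < q := by linarith
  have hqinv1 : 1 / q < 1 := by rw [div_lt_one hq0]; exact hq
  have hqinv0 : 0 < 1 / q := by positivity
  have hpinv_pos : 0 < 1 / p := by linarith
  have hp0 : 0 < p := one_div_pos.mp hpinv_pos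
  have hp : 1 < p := (div_lt_one hp0).mp (by linarith)
  set m : ℝ := (u + v) / 2 with hm
  have hum : u < m := by rw [hm]; linarith
  have hmv : m < v := by rw [hm]; linarith
  have hm_mem : m ∈ Set.Icc u v := ⟨hum.le, hmv.le⟩
  have hu_mem : u ∈ Set.Icc u v := ⟨le_refl u, huv.le⟩
  have hv_mem : v ∈ Set.Icc u v := ⟨huv.le, le_refl v⟩
  have hderiv' : ∀ x ∈ Set.Icc u v, HasDerivAt f (f' x) x := fun x hx =>
    hderiv x (by rw [interior_Ici]; exact lt_of_lt_of_le hu hx.1)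
  have hcontf : ContinuousOn f (Set.Icc u v) := fun x hx =>
    ((hderiv' x hx).continuousAt).continuousWithinAt
  have hsub1 : Set.uIcc u m ⊆ Set.Icc u v := by
    rw [Set.uIcc_of_le hum.le]; exact Set.Icc_subset_Icc (le_refl u) hmv.le
  have hsub2 : Set.uIcc m v ⊆ Set.Icc u v := by
    rw [Set.uIcc_of_le hmv.le]; exact Set.Icc_subset_Icc hum.le (le_refl v)
  have huvIcc : Set.uIcc u v = Set.Icc u v := Set.uIcc_of_le huv.le
  have hf_int1 : IntervalIntegrable f MeasureTheory.volume u m :=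
    (hcontf.mono hsub1).intervalIntegrable
  have hf_int2 : IntervalIntegrable f MeasureTheory.volume m v :=
    (hcontf.mono hsub2).intervalIntegrable
  have hf'1 : IntervalIntegrable f' MeasureTheory.volume u m :=
    hint.mono_set (by rw [huvIcc]; exact hsub1)
  have hf'2 : IntervalIntegrable f' MeasureTheory.volume m v :=
    hint.mono_set (by rw [huvIcc]; exact hsub2)
  -- integration by parts on each half
  have hderivw : ∀ x : ℝ, ∀ c : ℝ, HasDerivAt (fun μ => 2 * μ - c) 2 x := fun x c => by
    simpa using ((hasDerivAt_id x).const_mul (2:ℝ)).sub_const c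
  have hI1 : (∫ μ in u..m, (2 * μ - u) * f' μ)
      = v * f m - u * f u - 2 * ∫ μ in u..m, f μ := by
    have h := intervalIntegral.integral_mul_deriv_eq_deriv_mul
      (fun x _ => hderivw x u) (fun x hx => hderiv' x (hsub1 hx))
      (_root_.intervalIntegrable_const (c := (2:ℝ))) hf'1
    rw [h, intervalIntegral.integral_const_mul]
    have : 2 * m - u = v := by rw [hm]; ring
    rw [this]; ring
  have hI2 : (∫ μ in m..v, (2 * μ - v) * f' μ)
      = v * f v - u * f m - 2 * ∫ μ in m..v, f μ := by
    have h := intervalIntegral.integral_mul_deriv_eq_deriv_mul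
      (fun x _ => hderivw x v) (fun x hx => hderiv' x (hsub2 hx))
      (_root_.intervalIntegrable_const (c := (2:ℝ))) hf'2
    rw [h, intervalIntegral.integral_const_mul]
    have : 2 * m - v = u := by rw [hm]; ring
    rw [this]; ring
  have hsplit : (∫ μ in u..v, f μ) = (∫ μ in u..m, f μ) + ∫ μ in m..v, f μ :=
    (intervalIntegral.integral_add_adjacent_intervals hf_int1 hf_int2).symm
  have hkey : (v * f v - u * f u) / (2 * (v - u)) + (1 / 2) * f m
        - (1 / (v - u)) * ∫ μ in u..v, f μ
      = ((∫ μ in u..m, (2 * μ - u) * f' μ) + ∫ μ in m..v, (2 * μ - v) * f' μ)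
          / (2 * (v - u)) := by
    rw [hI1, hI2, hsplit]
    field_simp
    ring
  -- bounds from the half-lemma
  have res1 := stmt9_half f' u v u m u p q s hu huv hq hpq hp hs0 hs1 hum
    (by ring) (by rw [hm]; ring) hf'1
    (fun t ht => hsconv m hm_mem u hu_mem t ht)
  have res2 := stmt9_half f' u v m v v p q s hu huv hq hpq hp hs0 hs1 hmv
    (by rw [hm]; ring) (by ring) hf'2
    (fun t ht => hsconv v hv_mem m hm_mem t ht)
  rw [add_comm (|f' u| ^ q) (|f' m| ^ q)] at res1
  set L : ℝ := ((v ^ (p + 1) - u ^ (p + 1)) / ((p + 1) * (v - u))) ^ (1 / p) with hL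
  have hW0 : (0:ℝ) ≤ v ^ (p + 1) - u ^ (p + 1) :=
    sub_nonneg.2 (Real.rpow_le_rpow hu.le huv.le (by linarith))
  have hL0 : 0 ≤ L := Real.rpow_nonneg (div_nonneg hW0 (by positivity)) _
  constructor
  · rw [hkey, abs_div, abs_of_pos (by linarith : (0:ℝ) < 2 * (v - u))]
    have h3 : |(∫ μ in u..m, (2 * μ - u) * f' μ) + ∫ μ in m..v, (2 * μ - v) * f' μ|
        ≤ L * ((v - u) / 2) * ((|f' m| ^ q + |f' u| ^ q) / (s + 1)) ^ (1 / q)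
          + L * ((v - u) / 2) * ((|f' m| ^ q + |f' v| ^ q) / (s + 1)) ^ (1 / q) :=
      (abs_add_le _ _).trans (add_le_add res1 res2)
    calc |(∫ μ in u..m, (2 * μ - u) * f' μ) + ∫ μ in m..v, (2 * μ - v) * f' μ|
          / (2 * (v - u))
        ≤ (L * ((v - u) / 2) * ((|f' m| ^ q + |f' u| ^ q) / (s + 1)) ^ (1 / q)
            + L * ((v - u) / 2) * ((|f' m| ^ q + |f' v| ^ q) / (s + 1)) ^ (1 / q))
          / (2 * (v - u)) := by gcongr
      _ = L / 4 * (((|f' m| ^ q + |f' v| ^ q) / (s + 1)) ^ (1 / q)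
            + ((|f' m| ^ q + |f' u| ^ q) / (s + 1)) ^ (1 / q)) := by
          field_simp
          ring
  · have h1 : ∀ X : ℝ, 0 ≤ X → (X / (s + 1)) ^ (1 / q) ≤ X ^ (1 / q) := fun X hX =>
      Real.rpow_le_rpow (by positivity) (div_le_self hX (by linarith)) (by positivity)
    have hXv : (0:ℝ) ≤ |f' m| ^ q + |f' v| ^ q := by positivity
    have hXu : (0:ℝ) ≤ |f' m| ^ q + |f' u| ^ q := by positivity
    exact mul_le_mul_of_nonneg_left (add_le_add (h1 _ hXv) (h1 _ hXu)) (by positivity)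
end

section
/- Let 0 < u < v, s ∈ (0,1], q > 1 and p satisfy 1/p + 1/q = 1. Then |(s-1)·L_s(u,v)^s + A(u,v)^s| ≤ (L_p(u,v)/2)·(s/(s+1))^{1/q}·[(((u+v)/2)^{(s-1)q} + v^{(s-1)q})^{1/q} + (((u+v)/2)^{(s-1)q} + u^{(s-1)q})^{1/q}]. -/
open Real MeasureTheory intervalIntegral

private lemma tangent_line {A x p : ℝ} (hA : 0 < A) (hx : 0 ≤ x) (hp : 1 ≤ p) :
    A ^ p + p * A ^ (p - 1) * (x - A) ≤ x ^ p := by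
  have hz : -1 ≤ x / A - 1 := by
    have : 0 ≤ x / A := div_nonneg hx hA.le
    linarith
  have h := one_add_mul_self_le_rpow_one_add hz hp
  rw [show 1 + (x / A - 1) = x / A by ring, Real.div_rpow hx hA.le] at h
  have hAp : (0:ℝ) < A ^ p := Real.rpow_pos_of_pos hA p
  have h2 := mul_le_mul_of_nonneg_right h hAp.le
  rw [div_mul_cancel₀ _ hAp.ne'] at h2
  have hApm : A ^ (p - 1) = A ^ p / A := by
    rw [Real.rpow_sub hA, Real.rpow_one]
  calc A ^ p + p * A ^ (p - 1) * (x - A)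
      = (1 + p * (x / A - 1)) * A ^ p := by
        rw [hApm]; field_simp
    _ ≤ x ^ p := h2

private lemma jensen_point {u v p : ℝ} (hu : 0 < u) (huv : u < v) (hp : 1 ≤ p) :
    ((u + v) / 2) ^ p ≤ (v ^ (p + 1) - u ^ (p + 1)) / ((p + 1) * (v - u)) := by
  have hA : 0 < (u + v) / 2 := by linarith
  have hvu : 0 < v - u := by linarith
  have hp1 : (0:ℝ) < p + 1 := by linarith
  have hint1 : ∫ x in u..v, x ^ p = (v ^ (p + 1) - u ^ (p + 1)) / (p + 1) :=
    integral_rpow (Or.inl (by linarith))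
  have hcont : Continuous fun x : ℝ =>
      ((u + v) / 2) ^ p + p * ((u + v) / 2) ^ (p - 1) * (x - (u + v) / 2) := by
    fun_prop
  have hi1 : IntervalIntegrable (fun x : ℝ =>
      ((u + v) / 2) ^ p + p * ((u + v) / 2) ^ (p - 1) * (x - (u + v) / 2)) volume u v :=
    hcont.intervalIntegrable u v
  have hi2 : IntervalIntegrable (fun x : ℝ => x ^ p) volume u v :=
    intervalIntegrable_rpow (Or.inl (by linarith))
  have hmono := integral_mono_on (μ := volume) huv.le hi1 hi2
      (fun x hx => tangent_line hA (le_trans hu.le hx.1) hp)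
  have hint2 : (∫ x in u..v,
      (((u + v) / 2) ^ p + p * ((u + v) / 2) ^ (p - 1) * (x - (u + v) / 2)))
      = (v - u) * ((u + v) / 2) ^ p := by
    have hrw : (fun x : ℝ =>
        ((u + v) / 2) ^ p + p * ((u + v) / 2) ^ (p - 1) * (x - (u + v) / 2))
        = fun x : ℝ => (p * ((u + v) / 2) ^ (p - 1)) * x
            + (((u + v) / 2) ^ p - p * ((u + v) / 2) ^ (p - 1) * ((u + v) / 2)) := by
      funext x; ring
    have hf : IntervalIntegrable (fun x : ℝ => (p * ((u + v) / 2) ^ (p - 1)) * x) volume u v := by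
      apply Continuous.intervalIntegrable; fun_prop
    rw [hrw, intervalIntegral.integral_add hf intervalIntegrable_const,
      intervalIntegral.integral_const_mul, integral_id, intervalIntegral.integral_const]
    simp only [smul_eq_mul]
    ring
  rw [hint1, hint2] at hmono
  rw [le_div_iff₀ (by positivity)] at hmono
  rw [le_div_iff₀ (by positivity)]
  linarith only [hmono]

private lemma pair_lb {a b q : ℝ} (ha : 0 < a) (hb : 0 < b) (hq : 1 < q) :
    2 ^ (1/q) * ((a ^ (1/q) + b ^ (1/q)) / 2) ≤ (a + b) ^ (1/q) := by
  have hq0 : 0 < q := by linarith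
  have hiq0 : (0:ℝ) < 1/q := by positivity
  have hX0 : 0 ≤ a ^ (1/q) := (Real.rpow_pos_of_pos ha _).le
  have hY0 : 0 ≤ b ^ (1/q) := (Real.rpow_pos_of_pos hb _).le
  have hXq : (a ^ (1/q)) ^ q = a := by
    rw [← Real.rpow_mul ha.le, one_div_mul_cancel hq0.ne', Real.rpow_one]
  have hYq : (b ^ (1/q)) ^ q = b := by
    rw [← Real.rpow_mul hb.le, one_div_mul_cancel hq0.ne', Real.rpow_one]
  have hconv := (convexOn_rpow hq.le).2 (Set.mem_Ici.mpr hX0) (Set.mem_Ici.mpr hY0)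
      (by norm_num : (0:ℝ) ≤ 1/2) (by norm_num : (0:ℝ) ≤ 1/2) (by norm_num)
  simp only [smul_eq_mul] at hconv
  rw [hXq, hYq] at hconv
  have h2 : ((a ^ (1/q) + b ^ (1/q)) / 2) ^ q ≤ (a + b) / 2 := by
    have e : (1:ℝ)/2 * (a ^ (1/q)) + 1/2 * (b ^ (1/q)) = (a ^ (1/q) + b ^ (1/q)) / 2 := by ring
    rw [e] at hconv; linarith
  have h3 := Real.rpow_le_rpow (Real.rpow_nonneg (by positivity) q) h2 hiq0.le
  rw [← Real.rpow_mul (by positivity : (0:ℝ) ≤ (a ^ (1/q) + b ^ (1/q)) / 2),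
    mul_one_div, div_self hq0.ne', Real.rpow_one] at h3
  have hmul : (2:ℝ) ^ (1/q) * ((a + b)/2) ^ (1/q) = (a + b) ^ (1/q) := by
    rw [← Real.mul_rpow (by norm_num) (by positivity), show (2:ℝ) * ((a+b)/2) = a + b by ring]
  calc 2 ^ (1/q) * ((a ^ (1/q) + b ^ (1/q)) / 2)
      ≤ 2 ^ (1/q) * ((a + b)/2) ^ (1/q) :=
        mul_le_mul_of_nonneg_left h3 (Real.rpow_nonneg (by norm_num) _)
    _ = (a + b) ^ (1/q) := hmul

private lemma amgm_half {x y t : ℝ} (hx : 0 < x) (hy : 0 < y) (ht : 0 ≤ t)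
    (h : t * t = x * y) : t ≤ (x + y) / 2 := by
  nlinarith [sq_nonneg (2*t - (x+y)), sq_nonneg (x - y), hx, hy, ht]

set_option maxHeartbeats 2000000 in
theorem stmt_10 (u v p q s : ℝ) (hu : 0 < u) (huv : u < v)
    (hq : 1 < q) (hpq : 1 / p + 1 / q = 1) (hs0 : 0 < s) (hs1 : s ≤ 1) :
    |(s - 1) * ((v ^ (s + 1) - u ^ (s + 1)) / ((s + 1) * (v - u))) + ((u + v) / 2) ^ s|
      ≤ (((v ^ (p + 1) - u ^ (p + 1)) / ((p + 1) * (v - u))) ^ (1 / p) / 2) *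
          (s / (s + 1)) ^ (1 / q) *
          ((((u + v) / 2) ^ ((s - 1) * q) + v ^ ((s - 1) * q)) ^ (1 / q)
            + (((u + v) / 2) ^ ((s - 1) * q) + u ^ ((s - 1) * q)) ^ (1 / q)) := by
  have hv : 0 < v := hu.trans huv
  have hvu : 0 < v - u := by linarith
  have hq0 : 0 < q := by linarith
  have hiq0 : (0:ℝ) < 1/q := by positivity
  have hiq1 : 1/q < 1 := by rw [div_lt_one hq0]; exact hq
  have hp0 : 0 < p := by
    have h1 : 0 < 1/p := by linarith
    exact one_div_pos.mp h1
  have hp1 : 1 < p := by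
    have h1 : 1/p < 1 := by linarith
    rw [div_lt_one hp0] at h1; exact h1
  have hs1' : (0:ℝ) < s + 1 := by linarith
  obtain ⟨A, hAdef⟩ : ∃ A : ℝ, A = (u + v) / 2 := ⟨_, rfl⟩
  obtain ⟨c, hcdef⟩ : ∃ c : ℝ, c = (s - 1) * q := ⟨_, rfl⟩
  obtain ⟨σ, hσdef⟩ : ∃ σ : ℝ, σ = (v ^ (s+1) - u ^ (s+1)) / (v - u) := ⟨_, rfl⟩
  rw [← hAdef, ← hcdef]
  have hA0 : (0:ℝ) < A := by rw [hAdef]; linarith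
  have hAv : A ≤ v := by rw [hAdef]; linarith
  have huA : u ≤ A := by rw [hAdef]; linarith
  have hus1 : 0 < u ^ (s-1) := Real.rpow_pos_of_pos hu _
  have hvs1 : 0 < v ^ (s-1) := Real.rpow_pos_of_pos hv _
  have hAs1 : 0 < A ^ (s-1) := Real.rpow_pos_of_pos hA0 _
  have hAs : 0 < A ^ s := Real.rpow_pos_of_pos hA0 _
  have hvs : 0 < v ^ s := Real.rpow_pos_of_pos hv _
  have hAc : 0 < A ^ c := Real.rpow_pos_of_pos hA0 _
  have hvc : 0 < v ^ c := Real.rpow_pos_of_pos hv _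
  have huc : 0 < u ^ c := Real.rpow_pos_of_pos hu _
  have hI : (v ^ (s + 1) - u ^ (s + 1)) / ((s + 1) * (v - u)) = σ / (s+1) := by
    rw [hσdef, div_div, mul_comm]
  -- σ lower bound
  have hss : u ^ s ≤ v ^ s := Real.rpow_le_rpow hu.le huv.le hs0.le
  have hAvs : A ^ s ≤ v ^ s := Real.rpow_le_rpow hA0.le hAv hs0.le
  have ev1 : v ^ (s+1) = v ^ s * v := by rw [Real.rpow_add hv, Real.rpow_one]
  have eu1 : u ^ (s+1) = u ^ s * u := by rw [Real.rpow_add hu, Real.rpow_one]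
  have hσv : v ^ s ≤ σ := by
    rw [hσdef, le_div_iff₀ hvu, ev1, eu1]
    have h := mul_le_mul_of_nonneg_right hss hu.le
    linarith only [h]
  have hσ_lb : A ^ s ≤ σ := le_trans hAvs hσv
  -- W lower bound
  have hPA : A ^ s = A * A ^ (s-1) := by
    nth_rewrite 1 [show s = 1 + (s-1) by ring]
    rw [Real.rpow_add hA0, Real.rpow_one]
  have hGA : (u*v) ^ ((1:ℝ)/2) ≤ A := by
    have hA2 : A ^ (2:ℝ) = A * A := by
      rw [show (2:ℝ) = 1+1 by norm_num, Real.rpow_add hA0, Real.rpow_one]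
    have h1 : u*v ≤ A ^ (2:ℝ) := by
      rw [hA2, hAdef]; linarith only [sq_nonneg (u - v)]
    have h2 := Real.rpow_le_rpow (by positivity : (0:ℝ) ≤ u*v) h1
      (by norm_num : (0:ℝ) ≤ 1/2)
    rwa [← Real.rpow_mul hA0.le, show (2:ℝ)*(1/2) = 1 by norm_num, Real.rpow_one] at h2
  have hmid : A ^ (s-1) ≤ (u^(s-1) + v^(s-1))/2 := by
    have hG0 : 0 < (u*v) ^ ((1:ℝ)/2) := Real.rpow_pos_of_pos (by positivity) _
    have h3 : A ^ (s-1) ≤ ((u*v) ^ ((1:ℝ)/2)) ^ (s-1) :=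
      Real.rpow_le_rpow_of_nonpos hG0 hGA (by linarith)
    have h4 : ((u*v) ^ ((1:ℝ)/2)) ^ (s-1) = (u^(s-1) * v^(s-1)) ^ ((1:ℝ)/2) := by
      rw [← Real.rpow_mul (by positivity : (0:ℝ) ≤ u*v),
        show (1:ℝ)/2*(s-1) = (s-1)*(1/2) by ring,
        Real.rpow_mul (by positivity : (0:ℝ) ≤ u*v), Real.mul_rpow hu.le hv.le]
    have ht0 : 0 ≤ (u^(s-1) * v^(s-1)) ^ ((1:ℝ)/2) :=
      (Real.rpow_pos_of_pos (by positivity) _).le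
    have ht2 : (u^(s-1) * v^(s-1)) ^ ((1:ℝ)/2) * (u^(s-1) * v^(s-1)) ^ ((1:ℝ)/2)
        = u^(s-1) * v^(s-1) := by
      rw [← Real.rpow_add (by positivity)]; norm_num
    have h5 : (u^(s-1) * v^(s-1)) ^ ((1:ℝ)/2) ≤ (u^(s-1)+v^(s-1))/2 :=
      amgm_half hus1 hvs1 ht0 ht2
    linarith
  have hW : A ^ s ≤ A * ((u^(s-1) + v^(s-1))/2) := by
    rw [hPA]; exact mul_le_mul_of_nonneg_left hmid hA0.le
  have key : A ^ s ≤ (1-s) * σ + s * (A * ((u^(s-1)+v^(s-1))/2)) := by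
    have k1 := mul_le_mul_of_nonneg_left hσ_lb (by linarith : (0:ℝ) ≤ 1 - s)
    have k2 := mul_le_mul_of_nonneg_left hW hs0.le
    linarith only [k1, k2]
  -- main step 1
  have hnum : (s-1)*σ + (s+1)*(A^s) ≤ s * ((A/2) * (2*A^(s-1)+u^(s-1)+v^(s-1))) := by
    have hexp : (A/2) * (2*A^(s-1)+u^(s-1)+v^(s-1))
        = A*A^(s-1) + A*((u^(s-1)+v^(s-1))/2) := by ring
    rw [hexp, ← hPA]
    linarith only [key]
  have h_main1 : (s-1)*(σ/(s+1)) + A^s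
      ≤ s/(s+1) * ((A/2) * (2*A^(s-1)+u^(s-1)+v^(s-1))) := by
    have e1 : (s-1)*(σ/(s+1)) + A^s = ((s-1)*σ + (s+1)*(A^s))/(s+1) := by
      field_simp
    have e2 : s/(s+1) * ((A/2) * (2*A^(s-1)+u^(s-1)+v^(s-1)))
        = (s * ((A/2) * (2*A^(s-1)+u^(s-1)+v^(s-1))))/(s+1) := by ring
    rw [e1, e2]
    gcongr
  -- nonnegativity of LHS
  have hσub : σ ≤ (s+1) * (v^s) := by
    rw [hσdef, div_le_iff₀ hvu]
    have ht := tangent_line hv hu.le (by linarith : (1:ℝ) ≤ s+1)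
    rw [show s+1-1 = s by ring] at ht
    linarith only [ht]
  have h2s : (2:ℝ)^s ≤ 1 + s := by
    have hgeb : (1:ℝ) ≤ 1/s := by
      rw [le_div_iff₀ hs0]; linarith
    have hb := one_add_mul_self_le_rpow_one_add (by linarith : (-1:ℝ) ≤ s) hgeb
    have e : 1/s*s = 1 := one_div_mul_cancel hs0.ne'
    have hb2 : (2:ℝ) ≤ (1+s)^(1/s) := by
      rw [e] at hb; linarith
    have hb3 := Real.rpow_le_rpow (by norm_num : (0:ℝ) ≤ 2) hb2 hs0.le
    rwa [← Real.rpow_mul (by linarith : (0:ℝ) ≤ 1+s), one_div_mul_cancel hs0.ne',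
      Real.rpow_one] at hb3
  have hv2A : v ^ s ≤ (2:ℝ)^s * A^s := by
    have hvA2 : v ≤ 2*A := by rw [hAdef]; linarith
    calc v ^ s ≤ (2*A) ^ s := Real.rpow_le_rpow hv.le hvA2 hs0.le
      _ = 2^s * A^s := Real.mul_rpow (by norm_num) hA0.le
  have hcomb : (1-s) * σ ≤ (s+1) * (A^s) := by
    have e1 : (1-s)*σ ≤ (1-s)*((s+1)*(v^s)) :=
      mul_le_mul_of_nonneg_left hσub (by linarith)
    have e2 : (1-s)*((s+1)*(v^s)) ≤ (1-s)*((s+1)*((2:ℝ)^s * A^s)) := by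
      apply mul_le_mul_of_nonneg_left _ (by linarith : (0:ℝ) ≤ 1-s)
      exact mul_le_mul_of_nonneg_left hv2A hs1'.le
    have e3 : (1-s)*((s+1)*((2:ℝ)^s * A^s)) ≤ (1-s)*((s+1)*((1+s)*(A^s))) := by
      apply mul_le_mul_of_nonneg_left _ (by linarith : (0:ℝ) ≤ 1-s)
      apply mul_le_mul_of_nonneg_left _ hs1'.le
      exact mul_le_mul_of_nonneg_right h2s hAs.le
    have e4 : (1-s)*((s+1)*((1+s)*(A^s))) ≤ (s+1)*(A^s) := by
      linarith only [mul_nonneg (mul_nonneg hs1'.le hAs.le) (sq_nonneg s)]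
    linarith
  have h_nonneg : 0 ≤ (s-1)*(σ/(s+1)) + A^s := by
    have h1 : (1-s)*σ/(s+1) ≤ A^s := by
      rw [div_le_iff₀ hs1']
      linarith only [hcomb]
    have h2 : (s-1)*(σ/(s+1)) = -((1-s)*σ/(s+1)) := by ring
    linarith
  -- X step
  have hXs : s/(s+1) ≤ (s/(s+1))^(1/q) * 2^(1/q) / 2 := by
    have hx0 : 0 < 2*(s/(s+1)) := by positivity
    have hx1 : 2*(s/(s+1)) ≤ 1 := by
      rw [show 2*(s/(s+1)) = 2*s/(s+1) by ring, div_le_one hs1']; linarith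
    have h1 : (2*(s/(s+1))) ^ (1:ℝ) ≤ (2*(s/(s+1))) ^ (1/q) :=
      Real.rpow_le_rpow_of_exponent_ge hx0 hx1 hiq1.le
    rw [Real.rpow_one] at h1
    have h2 : (2*(s/(s+1))) ^ (1/q) = 2^(1/q) * (s/(s+1)) ^ (1/q) :=
      Real.mul_rpow (by norm_num) (by positivity)
    rw [h2] at h1
    linarith only [h1]
  -- bracket lower bound
  have hc1 : c * (1/q) = s - 1 := by
    rw [hcdef]; field_simp
  have hAcq : (A^c) ^ (1/q) = A ^ (s-1) := by rw [← Real.rpow_mul hA0.le, hc1]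
  have hvcq : (v^c) ^ (1/q) = v ^ (s-1) := by rw [← Real.rpow_mul hv.le, hc1]
  have hucq : (u^c) ^ (1/q) = u ^ (s-1) := by rw [← Real.rpow_mul hu.le, hc1]
  have p1 := pair_lb hAc hvc hq
  have p2 := pair_lb hAc huc hq
  rw [hAcq, hvcq] at p1
  rw [hAcq, hucq] at p2
  have hB : 2^(1/q) * ((2*A^(s-1)+u^(s-1)+v^(s-1))/2)
      ≤ (A^c + v^c)^(1/q) + (A^c + u^c)^(1/q) := by
    linarith only [p1, p2]
  -- Lp lower bound
  have hjp := jensen_point hu huv hp1.le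
  rw [← hAdef] at hjp
  have hLp : A ≤ ((v^(p+1) - u^(p+1))/((p+1)*(v-u)))^(1/p) := by
    have h := Real.rpow_le_rpow (Real.rpow_pos_of_pos hA0 p).le hjp
      (by positivity : (0:ℝ) ≤ 1/p)
    rwa [← Real.rpow_mul hA0.le, mul_one_div, div_self hp0.ne', Real.rpow_one] at h
  -- assembly
  have hT0 : 0 ≤ 2*A^(s-1)+u^(s-1)+v^(s-1) := by linarith
  have hX0 : 0 ≤ (s/(s+1))^(1/q) := Real.rpow_nonneg (by positivity) _
  have hB0 : 0 ≤ (A^c + v^c)^(1/q) + (A^c + u^c)^(1/q) := by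
    have b1 : 0 ≤ (A^c + v^c)^(1/q) := Real.rpow_nonneg (by linarith) _
    have b2 : 0 ≤ (A^c + u^c)^(1/q) := Real.rpow_nonneg (by linarith) _
    linarith
  rw [hI, abs_of_nonneg h_nonneg]
  calc (s-1)*(σ/(s+1)) + A^s
      ≤ s/(s+1) * ((A/2) * (2*A^(s-1)+u^(s-1)+v^(s-1))) := h_main1
    _ ≤ ((s/(s+1))^(1/q) * 2^(1/q) / 2) * ((A/2) * (2*A^(s-1)+u^(s-1)+v^(s-1))) := by
        apply mul_le_mul_of_nonneg_right hXs
        apply mul_nonneg (by linarith) hT0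
    _ = ((s/(s+1))^(1/q) * (A/2)) * (2^(1/q) * ((2*A^(s-1)+u^(s-1)+v^(s-1))/2)) := by
        ring
    _ ≤ ((s/(s+1))^(1/q) * (A/2)) * ((A^c + v^c)^(1/q) + (A^c + u^c)^(1/q)) := by
        apply mul_le_mul_of_nonneg_left hB
        exact mul_nonneg hX0 (by linarith)
    _ ≤ ((s/(s+1))^(1/q) * (((v^(p+1) - u^(p+1))/((p+1)*(v-u)))^(1/p)/2)) *
          ((A^c + v^c)^(1/q) + (A^c + u^c)^(1/q)) := by
        apply mul_le_mul_of_nonneg_right _ hB0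
        apply mul_le_mul_of_nonneg_left _ hX0
        linarith
    _ = (((v^(p+1) - u^(p+1))/((p+1)*(v-u)))^(1/p)/2) * (s/(s+1))^(1/q) *
          ((A^c + v^c)^(1/q) + (A^c + u^c)^(1/q)) := by ring
end
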